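/- arXiv:2011.11618 — 6 statements merged into one kernel-verified Lean document; each statement's English description precedes it below -/
import Mathlib

section
/- For every finite sequence X of numbers in [0,1] with Sum(X) ≤ 1, we have ∑_{x ∈ X} f_k(x) ≤ max(μ, 2). In particular, if μ ≥ 2 then the max-knapsack-profit of f_k equals μ. -/
/-- The max-knapsack-profit (LP(k, μ)): supremum of ∑ f(xᵢ) over finite
sequences with entries in [0,1] and sum at most 1. -/
noncomputable def LPopt (f : ℝ → ℝ) : ℝ :=
  sSup {s | ∃ n : ℕ, ∃ X : Fin n → ℝ,
    (∀ i, X i ∈ Set.Icc (0 : ℝ) 1) ∧ (∑ i, X i) ≤ 1 ∧ s = ∑ i, f (X i)}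

theorem LP_upper_bound (k : ℕ) (μ : ℝ) (f : ℝ → ℝ)
    (hk : 1 ≤ k) (hμ : μ ∈ Set.Icc (0 : ℝ) k)
    (hf1 : ∀ j : ℕ, 1 ≤ j → j ≤ k - 1 →
      ∀ x ∈ Set.Ioc (1 / ((j : ℝ) + 1)) (1 / (j : ℝ)), f x = 1 / (j : ℝ))
    (hf2 : ∀ x ∈ Set.Icc (0 : ℝ) (1 / (k : ℝ)), f x = μ * x) :
    (∀ n : ℕ, ∀ X : Fin n → ℝ,
      (∀ i, X i ∈ Set.Icc (0 : ℝ) 1) → (∑ i, X i) ≤ 1 → (∑ i, f (X i)) ≤ max μ 2) ∧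
    (2 ≤ μ → LPopt f = μ) := by
  obtain ⟨hμ0, hμk⟩ := hμ
  have hk' : (1:ℝ) ≤ (k:ℝ) := by exact_mod_cast hk
  have hkpos : (0:ℝ) < (k:ℝ) := by linarith
  -- pointwise bound
  have key : ∀ x ∈ Set.Icc (0:ℝ) 1, f x ≤ max μ 2 * x := by
    intro x hx
    obtain ⟨hx0, hx1⟩ := hx
    by_cases hxk : x ≤ 1 / (k:ℝ)
    · rw [hf2 x ⟨hx0, hxk⟩]
      have : μ ≤ max μ 2 := le_max_left _ _
      nlinarith
    · push_neg at hxk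
      have hx0' : (0:ℝ) < x := lt_trans (by positivity) hxk
      set j := Nat.floor (1/x) with hj
      have hjle : (j:ℝ) ≤ 1/x := Nat.floor_le (by positivity)
      have hj1 : 1 ≤ j := by
        rw [hj, Nat.le_floor_iff (by positivity)]
        push_cast
        exact one_le_one_div hx0' hx1
      have hj1' : (1:ℝ) ≤ (j:ℝ) := by exact_mod_cast hj1
      have hjpos : (0:ℝ) < (j:ℝ) := by linarith
      have hjlt : j < k := by
        rw [hj, Nat.floor_lt (by positivity)]
        rw [div_lt_iff₀ hx0']
        have := mul_lt_mul_of_pos_left hxk hkpos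
        rw [mul_one_div, div_self hkpos.ne'] at this; linarith
      have hjk : j ≤ k - 1 := by omega
      -- x ≤ 1/j
      have h1 : (j:ℝ) * x ≤ 1 := by
        have := mul_le_mul_of_nonneg_right hjle hx0'.le
        rwa [one_div, inv_mul_cancel₀ hx0'.ne'] at this
      have hxle : x ≤ 1 / (j:ℝ) := by
        rw [le_div_iff₀ hjpos]; nlinarith
      -- 1/(j+1) < x
      have h2 : 1/x < (j:ℝ) + 1 := by
        have := Nat.lt_floor_add_one (1/x)
        push_cast at this
        linarith
      have h2' : 1 < x * ((j:ℝ) + 1) := by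
        have := mul_lt_mul_of_pos_left h2 hx0'
        rwa [mul_one_div, div_self hx0'.ne'] at this
      have hxgt : 1 / ((j:ℝ) + 1) < x := by
        rw [div_lt_iff₀ (by positivity)]; nlinarith
      rw [hf1 j hj1 hjk x ⟨hxgt, hxle⟩]
      have h3 : 1 / (j:ℝ) ≤ 2 * x := by
        rw [div_le_iff₀ hjpos]; nlinarith
      have h4 : 2 * x ≤ max μ 2 * x :=
        mul_le_mul_of_nonneg_right (le_max_right μ 2) hx0'.le
      linarith
  have part1 : ∀ n : ℕ, ∀ X : Fin n → ℝ,
      (∀ i, X i ∈ Set.Icc (0 : ℝ) 1) → (∑ i, X i) ≤ 1 →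
      (∑ i, f (X i)) ≤ max μ 2 := by
    intro n X hX hsum
    have hmaxnn : (0:ℝ) ≤ max μ 2 := le_trans (by norm_num) (le_max_right μ 2)
    calc ∑ i, f (X i) ≤ ∑ i, max μ 2 * X i :=
          Finset.sum_le_sum (fun i _ => key _ (hX i))
      _ = max μ 2 * ∑ i, X i := by rw [Finset.mul_sum]
      _ ≤ max μ 2 * 1 := mul_le_mul_of_nonneg_left hsum hmaxnn
      _ = max μ 2 := mul_one _
  refine ⟨part1, fun hμ2 => ?_⟩
  have hmax : max μ 2 = μ := max_eq_left hμ2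
  -- μ is attained by X i = 1/k, i : Fin k
  have hmem : μ ∈ {s | ∃ n : ℕ, ∃ X : Fin n → ℝ,
      (∀ i, X i ∈ Set.Icc (0 : ℝ) 1) ∧ (∑ i, X i) ≤ 1 ∧ s = ∑ i, f (X i)} := by
    refine ⟨k, fun _ => 1 / (k:ℝ), fun i => ⟨by positivity, ?_⟩, ?_, ?_⟩
    · rw [div_le_one hkpos]; linarith
    · rw [Finset.sum_const, Finset.card_univ, Fintype.card_fin, nsmul_eq_mul,
        mul_one_div, div_self hkpos.ne']
    · have hf : f (1 / (k:ℝ)) = μ * (1 / (k:ℝ)) :=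
        hf2 _ ⟨by positivity, le_refl _⟩
      rw [Finset.sum_const, Finset.card_univ, Fintype.card_fin, hf, nsmul_eq_mul]
      field_simp
  refine le_antisymm (csSup_le ⟨μ, hmem⟩ ?_) (le_csSup ⟨μ, ?_⟩ hmem)
  · rintro s ⟨n, X, hX, hsum, rfl⟩
    rw [← hmax]; exact part1 n X hX hsum
  · rintro s ⟨n, X, hX, hsum, rfl⟩
    rw [← hmax]; exact part1 n X hX hsum
end

section
/- For any finite sequence X in [0,1] with Sum(X) ≤ 1, letting z_j = |X ∩ (1/(j+1), 1/j]| for j ∈ {1,...,k-1}, we have ∑_{x∈X} f_k(x) ≤ μ + ∑_{j=1}^{k-1} z_j(1/j − μ/(j+1)). Consequently sup LP(k, μ) ≤ opt IP(k, μ). -/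
/-- cost of an integer solution to IP(k, μ). -/
noncomputable def IPcost (k : ℕ) (z : ℕ → ℕ) : ℝ :=
  ∑ j ∈ Finset.Icc 1 (k - 1), (z j : ℝ) / ((j : ℝ) + 1)

/-- objective value of an integer solution to IP(k, μ). -/
noncomputable def IPscore (k : ℕ) (μ : ℝ) (z : ℕ → ℕ) : ℝ :=
  μ + ∑ j ∈ Finset.Icc 1 (k - 1), (z j : ℝ) * (1 / (j : ℝ) - μ / ((j : ℝ) + 1))

/-- optimum of IP(k, μ). -/
noncomputable def IPopt (k : ℕ) (μ : ℝ) : ℝ :=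
  sSup {s | ∃ z : ℕ → ℕ, IPcost k z < 1 ∧ s = IPscore k μ z}

/-- intervals (1/(j+1), 1/j] are pairwise disjoint -/
lemma cond_unique {x : ℝ} {j j' : ℕ} (hj : 1 ≤ j) (hj' : 1 ≤ j')
    (h : 1/((j:ℝ)+1) < x ∧ x ≤ 1/(j:ℝ))
    (h' : 1/((j':ℝ)+1) < x ∧ x ≤ 1/(j':ℝ)) : j = j' := by
  have aux : ∀ a b : ℕ, 1 ≤ a → a < b →
      1/((a:ℝ)+1) < x → x ≤ 1/(b:ℝ) → False := by
    intro a b _ hab h1 h2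
    have hb : ((a:ℝ)+1) ≤ (b:ℝ) := by exact_mod_cast hab
    have hpos : (0:ℝ) < (a:ℝ)+1 := by positivity
    have : 1/(b:ℝ) ≤ 1/((a:ℝ)+1) := one_div_le_one_div_of_le hpos hb
    linarith
  rcases lt_trichotomy j j' with hlt | heq | hgt
  · exact absurd (aux j j' hj hlt h.1 h'.2) (fun h => h)
  · exact heq
  · exact absurd (aux j' j hj' hgt h'.1 h.2) (fun h => h)

lemma sum_ite_eq_single {k : ℕ} {x : ℝ} (g : ℕ → ℝ) {j0 : ℕ}
    (hj0 : j0 ∈ Finset.Icc 1 (k-1))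
    (hc : 1/((j0:ℝ)+1) < x ∧ x ≤ 1/(j0:ℝ)) :
    (∑ j ∈ Finset.Icc 1 (k-1),
      if 1/((j:ℝ)+1) < x ∧ x ≤ 1/(j:ℝ) then g j else 0) = g j0 := by
  rw [Finset.sum_eq_single_of_mem j0 hj0]
  · rw [if_pos hc]
  · intro j hj hne
    rw [if_neg]
    intro hc'
    exact hne (cond_unique (Finset.mem_Icc.mp hj).1 (Finset.mem_Icc.mp hj0).1 hc' hc)

lemma exists_j {k : ℕ} {x : ℝ} (hk : 2 ≤ k) (hx1 : 1/(k:ℝ) < x) (hx2 : x ≤ 1) :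
    ∃ j0 ∈ Finset.Icc 1 (k-1), 1/((j0:ℝ)+1) < x ∧ x ≤ 1/(j0:ℝ) := by
  have hkpos : (0:ℝ) < k := by positivity
  have hxpos : 0 < x := lt_trans (by positivity) hx1
  refine ⟨⌊1/x⌋₊, ?_, ?_, ?_⟩
  · rw [Finset.mem_Icc]
    constructor
    · refine Nat.le_floor ?_
      rw [le_div_iff₀ hxpos]; push_cast; linarith
    · have hxk : 1/x < (k:ℝ) := by
        rw [div_lt_iff₀ hxpos]
        rw [div_lt_iff₀ hkpos] at hx1
        linarith
      have : ⌊1/x⌋₊ < k := by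
        have := Nat.floor_le (le_of_lt (by positivity : (0:ℝ) < 1/x))
        exact_mod_cast lt_of_le_of_lt this hxk
      omega
  · have h1 : (1:ℝ)/x < ⌊1/x⌋₊ + 1 := Nat.lt_floor_add_one _
    rw [div_lt_iff₀ hxpos] at h1
    rw [div_lt_iff₀ (by positivity : (0:ℝ) < (⌊1/x⌋₊:ℝ)+1)]
    linarith
  · have hfl : (⌊1/x⌋₊ : ℝ) ≤ 1/x := Nat.floor_le (by positivity)
    have h1 : 1 ≤ ⌊1/x⌋₊ := Nat.le_floor (by rw [le_div_iff₀ hxpos]; push_cast; linarith)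
    have hpos : (0:ℝ) < (⌊1/x⌋₊:ℝ) := by exact_mod_cast h1
    rw [le_div_iff₀ hpos]
    rw [le_div_iff₀ hxpos] at hfl
    linarith

lemma pointwise {k : ℕ} {μ : ℝ} {f : ℝ → ℝ} (hk : 2 ≤ k) (hμ0 : 0 ≤ μ)
    (hf1 : ∀ j : ℕ, 1 ≤ j → j ≤ k - 1 →
      ∀ x ∈ Set.Ioc (1 / ((j : ℝ) + 1)) (1 / (j : ℝ)), f x = 1 / (j : ℝ))
    (hf2 : ∀ x ∈ Set.Icc (0 : ℝ) (1 / (k : ℝ)), f x = μ * x)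
    {x : ℝ} (hx : x ∈ Set.Icc (0:ℝ) 1) :
    f x ≤ μ * x + ∑ j ∈ Finset.Icc 1 (k-1),
      (if 1/((j:ℝ)+1) < x ∧ x ≤ 1/(j:ℝ) then (1/(j:ℝ) - μ/((j:ℝ)+1)) else 0) := by
  rcases le_or_gt x (1/(k:ℝ)) with hle | hgt
  · rw [hf2 x ⟨hx.1, hle⟩]
    have hz : ∀ j ∈ Finset.Icc 1 (k-1),
        (if 1/((j:ℝ)+1) < x ∧ x ≤ 1/(j:ℝ) then (1/(j:ℝ) - μ/((j:ℝ)+1)) else 0) = 0 := by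
      intro j hj
      rw [if_neg]
      rintro ⟨h1, _⟩
      have hjk : (j:ℝ) + 1 ≤ k := by
        have := (Finset.mem_Icc.mp hj).2
        have : j + 1 ≤ k := by omega
        exact_mod_cast this
      have : 1/(k:ℝ) ≤ 1/((j:ℝ)+1) := one_div_le_one_div_of_le (by positivity) hjk
      linarith
    rw [Finset.sum_eq_zero hz]
    linarith
  · obtain ⟨j0, hj0, hc⟩ := exists_j hk hgt hx.2
    rw [hf1 j0 (Finset.mem_Icc.mp hj0).1 (Finset.mem_Icc.mp hj0).2 x ⟨hc.1, hc.2⟩]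
    rw [sum_ite_eq_single _ hj0 hc]
    have hj0pos : (0:ℝ) < (j0:ℝ) + 1 := by positivity
    have : μ / ((j0:ℝ)+1) ≤ μ * x :=
      calc μ/((j0:ℝ)+1) = μ * (1/((j0:ℝ)+1)) := by ring
        _ ≤ μ * x := mul_le_mul_of_nonneg_left (le_of_lt hc.1) hμ0
    linarith

lemma t_le {k : ℕ} {x : ℝ} (hx0 : 0 ≤ x) :
    (∑ j ∈ Finset.Icc 1 (k-1),
      if 1/((j:ℝ)+1) < x ∧ x ≤ 1/(j:ℝ) then 1/((j:ℝ)+1) else 0) ≤ x := by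
  by_cases h : ∃ j0 ∈ Finset.Icc 1 (k-1), 1/((j0:ℝ)+1) < x ∧ x ≤ 1/(j0:ℝ)
  · obtain ⟨j0, hj0, hc⟩ := h
    rw [sum_ite_eq_single _ hj0 hc]
    exact le_of_lt hc.1
  · rw [Finset.sum_eq_zero]
    · exact hx0
    · intro j hj
      rw [if_neg (fun hc' => h ⟨j, hj, hc'⟩)]

/-- convert z j (as ncard) times a weight into a sum of indicators -/
lemma z_mul_eq_sum {n : ℕ} {X : Fin n → ℝ} {z : ℕ → ℕ}
    (hz : ∀ j, z j = Set.ncard {i : Fin n |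
      1 / ((j : ℝ) + 1) < X i ∧ X i ≤ 1 / (j : ℝ)}) (g : ℕ → ℝ) (j : ℕ) :
    (z j : ℝ) * g j = ∑ i, if 1/((j:ℝ)+1) < X i ∧ X i ≤ 1/(j:ℝ) then g j else 0 := by
  classical
  rw [hz j]
  have hset : {i : Fin n | 1 / ((j : ℝ) + 1) < X i ∧ X i ≤ 1 / (j : ℝ)} =
      ↑(Finset.univ.filter fun i => 1/((j:ℝ)+1) < X i ∧ X i ≤ 1/(j:ℝ)) := by
    ext i; simp
  rw [hset, Set.ncard_coe_finset, ← Finset.sum_filter, Finset.sum_const, nsmul_eq_mul]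

lemma part1 {k : ℕ} {μ : ℝ} {f : ℝ → ℝ} (hk : 2 ≤ k) (hμ0 : 0 ≤ μ)
    (hf1 : ∀ j : ℕ, 1 ≤ j → j ≤ k - 1 →
      ∀ x ∈ Set.Ioc (1 / ((j : ℝ) + 1)) (1 / (j : ℝ)), f x = 1 / (j : ℝ))
    (hf2 : ∀ x ∈ Set.Icc (0 : ℝ) (1 / (k : ℝ)), f x = μ * x)
    (n : ℕ) (X : Fin n → ℝ) (hX : ∀ i, X i ∈ Set.Icc (0 : ℝ) 1)
    (hsum : (∑ i, X i) ≤ 1) (z : ℕ → ℕ)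
    (hz : ∀ j, z j = Set.ncard {i : Fin n |
      1 / ((j : ℝ) + 1) < X i ∧ X i ≤ 1 / (j : ℝ)}) :
    (∑ i, f (X i)) ≤ IPscore k μ z := by
  have step1 : (∑ i, f (X i)) ≤ ∑ i, (μ * X i + ∑ j ∈ Finset.Icc 1 (k-1),
      (if 1/((j:ℝ)+1) < X i ∧ X i ≤ 1/(j:ℝ) then (1/(j:ℝ) - μ/((j:ℝ)+1)) else 0)) :=
    Finset.sum_le_sum (fun i _ => pointwise hk hμ0 hf1 hf2 (hX i))
  rw [Finset.sum_add_distrib, Finset.sum_comm] at step1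
  have step2 : ∑ j ∈ Finset.Icc 1 (k-1), ∑ i,
      (if 1/((j:ℝ)+1) < X i ∧ X i ≤ 1/(j:ℝ) then (1/(j:ℝ) - μ/((j:ℝ)+1)) else 0)
      = ∑ j ∈ Finset.Icc 1 (k-1), (z j : ℝ) * (1/(j:ℝ) - μ/((j:ℝ)+1)) := by
    refine Finset.sum_congr rfl (fun j _ => ?_)
    exact (z_mul_eq_sum hz (fun j => 1/(j:ℝ) - μ/((j:ℝ)+1)) j).symm
  rw [step2] at step1
  have step3 : ∑ i, μ * X i ≤ μ := by
    rw [← Finset.mul_sum]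
    calc μ * (∑ i, X i) ≤ μ * 1 := mul_le_mul_of_nonneg_left hsum hμ0
      _ = μ := mul_one μ
  unfold IPscore
  linarith

lemma cost_lt {k : ℕ} (n : ℕ) (X : Fin n → ℝ) (hX : ∀ i, X i ∈ Set.Icc (0 : ℝ) 1)
    (hsum : (∑ i, X i) ≤ 1) (z : ℕ → ℕ)
    (hz : ∀ j, z j = Set.ncard {i : Fin n |
      1 / ((j : ℝ) + 1) < X i ∧ X i ≤ 1 / (j : ℝ)}) :
    IPcost k z < 1 := by
  have hcost : IPcost k z = ∑ i, ∑ j ∈ Finset.Icc 1 (k-1),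
      (if 1/((j:ℝ)+1) < X i ∧ X i ≤ 1/(j:ℝ) then 1/((j:ℝ)+1) else 0) := by
    unfold IPcost
    rw [Finset.sum_comm]
    refine Finset.sum_congr rfl (fun j _ => ?_)
    rw [div_eq_mul_one_div]
    exact z_mul_eq_sum hz (fun j => 1/((j:ℝ)+1)) j
  rw [hcost]
  by_cases h : ∃ i : Fin n, ∃ j0 ∈ Finset.Icc 1 (k-1),
      1/((j0:ℝ)+1) < X i ∧ X i ≤ 1/(j0:ℝ)
  · obtain ⟨i0, j0, hj0, hc⟩ := h
    have hlt : (∑ i, ∑ j ∈ Finset.Icc 1 (k-1),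
        (if 1/((j:ℝ)+1) < X i ∧ X i ≤ 1/(j:ℝ) then 1/((j:ℝ)+1) else 0)) < ∑ i, X i := by
      refine Finset.sum_lt_sum (fun i _ => t_le (hX i).1) ⟨i0, Finset.mem_univ i0, ?_⟩
      rw [sum_ite_eq_single _ hj0 hc]
      exact hc.1
    linarith
  · have : ∀ i : Fin n, (∑ j ∈ Finset.Icc 1 (k-1),
        (if 1/((j:ℝ)+1) < X i ∧ X i ≤ 1/(j:ℝ) then 1/((j:ℝ)+1) else 0)) = 0 := by
      intro i
      refine Finset.sum_eq_zero (fun j hj => ?_)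
      exact if_neg (fun hc' => h ⟨i, j, hj, hc'⟩)
    rw [Finset.sum_eq_zero (fun i _ => this i)]
    norm_num

theorem LP_le_IP (k : ℕ) (μ : ℝ) (f : ℝ → ℝ)
    (hk : 2 ≤ k) (hμ : μ ∈ Set.Icc (0 : ℝ) k)
    (hf1 : ∀ j : ℕ, 1 ≤ j → j ≤ k - 1 →
      ∀ x ∈ Set.Ioc (1 / ((j : ℝ) + 1)) (1 / (j : ℝ)), f x = 1 / (j : ℝ))
    (hf2 : ∀ x ∈ Set.Icc (0 : ℝ) (1 / (k : ℝ)), f x = μ * x) :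
    (∀ n : ℕ, ∀ X : Fin n → ℝ,
      (∀ i, X i ∈ Set.Icc (0 : ℝ) 1) → (∑ i, X i) ≤ 1 →
      ∀ z : ℕ → ℕ,
        (∀ j, z j = Set.ncard {i : Fin n |
          1 / ((j : ℝ) + 1) < X i ∧ X i ≤ 1 / (j : ℝ)}) →
        (∑ i, f (X i)) ≤ IPscore k μ z) ∧
    LPopt f ≤ IPopt k μ := by
  have hμ0 : 0 ≤ μ := hμ.1
  constructor
  · intro n X hX hsum z hz
    exact part1 hk hμ0 hf1 hf2 n X hX hsum z hz
  · -- bounded above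
    have hbdd : BddAbove {s | ∃ z : ℕ → ℕ, IPcost k z < 1 ∧ s = IPscore k μ z} := by
      refine ⟨μ + (k-1 : ℕ), ?_⟩
      rintro s ⟨z, hcost, rfl⟩
      unfold IPscore
      have hterm : ∀ j ∈ Finset.Icc 1 (k-1),
          (z j : ℝ) * (1/(j:ℝ) - μ/((j:ℝ)+1)) ≤ 1 := by
        intro j hj
        have hj1 : 1 ≤ j := (Finset.mem_Icc.mp hj).1
        have hjr : (1:ℝ) ≤ (j:ℝ) := by exact_mod_cast hj1
        have hzj : (z j : ℝ) / ((j:ℝ)+1) ≤ IPcost k z := by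
          unfold IPcost
          exact Finset.single_le_sum (f := fun j' => (z j' : ℝ)/((j':ℝ)+1))
            (fun j' _ => by positivity) hj
        have hzjlt : (z j : ℝ) < (j:ℝ) + 1 := by
          have h := lt_of_le_of_lt hzj hcost
          rwa [div_lt_one (by positivity : (0:ℝ) < (j:ℝ)+1)] at h
        have hzjle : (z j : ℝ) ≤ (j:ℝ) := by
          have : z j < j + 1 := by exact_mod_cast hzjlt
          have : z j ≤ j := by omega
          exact_mod_cast this
        have hμnn : 0 ≤ μ / ((j:ℝ)+1) := by positivity
        calc (z j : ℝ) * (1/(j:ℝ) - μ/((j:ℝ)+1))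
            ≤ (z j : ℝ) * (1/(j:ℝ)) := by
              apply mul_le_mul_of_nonneg_left _ (Nat.cast_nonneg _)
              linarith
          _ ≤ (j:ℝ) * (1/(j:ℝ)) := by
              apply mul_le_mul_of_nonneg_right hzjle
              positivity
          _ = 1 := by field_simp
      have hcard : (Finset.Icc 1 (k-1)).card = k - 1 := by
        rw [Nat.card_Icc]; omega
      have hsumle : ∑ j ∈ Finset.Icc 1 (k-1), (z j : ℝ) * (1/(j:ℝ) - μ/((j:ℝ)+1))
          ≤ (k-1 : ℕ) := by
        calc ∑ j ∈ Finset.Icc 1 (k-1), (z j : ℝ) * (1/(j:ℝ) - μ/((j:ℝ)+1))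
            ≤ ∑ j ∈ Finset.Icc 1 (k-1), (1:ℝ) := Finset.sum_le_sum hterm
          _ = ((Finset.Icc 1 (k-1)).card : ℝ) := by simp
          _ = (k-1 : ℕ) := by rw [hcard]
      linarith
    have hμmem : μ ∈ {s | ∃ z : ℕ → ℕ, IPcost k z < 1 ∧ s = IPscore k μ z} := by
      refine ⟨fun _ => 0, ?_, ?_⟩
      · unfold IPcost; simp
      · unfold IPscore; simp
    have hIP0 : 0 ≤ IPopt k μ := le_trans hμ0 (le_csSup hbdd hμmem)
    refine Real.sSup_le ?_ hIP0
    rintro s ⟨n, X, hX, hsum, rfl⟩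
    set z : ℕ → ℕ := fun j => Set.ncard {i : Fin n |
      1 / ((j : ℝ) + 1) < X i ∧ X i ≤ 1 / (j : ℝ)} with hzdef
    have hz : ∀ j, z j = Set.ncard {i : Fin n |
        1 / ((j : ℝ) + 1) < X i ∧ X i ≤ 1 / (j : ℝ)} := fun j => rfl
    have h1 := part1 hk hμ0 hf1 hf2 n X hX hsum z hz
    have h2 : IPcost k z < 1 := cost_lt n X hX hsum z hz
    exact le_trans h1 (le_csSup hbdd ⟨z, h2, rfl⟩)
end

section
/- For every ε with 0 < ε ≤ 1/cost(z) − 1 where z is feasible for IP(k, μ), there exists a feasible sequence X for the knapsack problem with ∑ f_k(x) ≥ score(z, k, μ) − με·cost(z). Hence sup LP(k, μ) ≥ opt IP(k, μ), and combined with the reverse inequality, sup LP(k, μ) = opt IP(k, μ). -/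
private lemma sum_fin_get (g : ℝ → ℝ) (L : List ℝ) :
    ∑ i : Fin L.length, g (L.get i) = (L.map g).sum := by
  induction L with
  | nil => simp
  | cons a t ih => simp [Fin.sum_univ_succ, ih]

private lemma flatMap_sum (l : List ℕ) (g : ℕ → List ℝ) :
    (l.flatMap g).sum = (l.map (fun a => (g a).sum)).sum := by
  induction l with
  | nil => simp
  | cons a t ih => simp [List.flatMap_cons, ih]

private lemma map_toList_sum (s : Finset ℕ) (g : ℕ → ℝ) :
    (s.toList.map g).sum = ∑ j ∈ s, g j := by
  calc (s.toList.map g).sum = ((s.toList.map g : List ℝ) : Multiset ℝ).sum := (Multiset.sum_coe _).symm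
    _ = (Multiset.map g ↑s.toList).sum := by rw [Multiset.map_coe]
    _ = (Multiset.map g s.val).sum := by rw [show s.toList = s.val.toList from rfl, Multiset.coe_toList]
    _ = ∑ j ∈ s, g j := rfl

private lemma cost_nonneg (k : ℕ) (z : ℕ → ℕ) : 0 ≤ IPcost k z :=
  Finset.sum_nonneg (fun j _ => by positivity)

private lemma score_split (k : ℕ) (μ : ℝ) (z : ℕ → ℕ) :
    IPscore k μ z = (∑ j ∈ Finset.Icc 1 (k-1), (z j : ℝ) * (1 / (j:ℝ)))
      + μ * (1 - IPcost k z) := by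
  unfold IPscore IPcost
  rw [mul_sub, mul_one, Finset.mul_sum]
  rw [show ∀ A B C : ℝ, μ + A = B + (μ - C) ↔ A = B - C from fun A B C => by constructor <;> intro <;> linarith]
  rw [← Finset.sum_sub_distrib]
  exact Finset.sum_congr rfl (fun j _ => by ring)

private lemma construct (k : ℕ) (μ : ℝ) (f : ℝ → ℝ)
    (hk : 2 ≤ k) (hμ0 : 0 ≤ μ)
    (hf1 : ∀ j : ℕ, 1 ≤ j → j ≤ k - 1 →
      ∀ x ∈ Set.Ioc (1 / ((j : ℝ) + 1)) (1 / (j : ℝ)), f x = 1 / (j : ℝ))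
    (hf2 : ∀ x ∈ Set.Icc (0 : ℝ) (1 / (k : ℝ)), f x = μ * x)
    (z : ℕ → ℕ) (ε : ℝ) (hε0 : 0 < ε) (hεk : ε ≤ 1 / (k:ℝ))
    (hc1 : (1 + ε) * IPcost k z ≤ 1) :
    ∃ n : ℕ, ∃ X : Fin n → ℝ,
      (∀ i, X i ∈ Set.Icc (0 : ℝ) 1) ∧ (∑ i, X i) ≤ 1 ∧
      ∑ i, f (X i) = IPscore k μ z - μ * ε * IPcost k z := by
  have hkR : (0:ℝ) < k := by exact_mod_cast (by omega : 0 < k)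
  set c := IPcost k z with hc
  have hc0 : 0 ≤ c := cost_nonneg k z
  set x : ℕ → ℝ := fun j => (1 + ε) / ((j:ℝ) + 1) with hx
  set y : ℝ := 1 - (1 + ε) * c with hy
  have hy0 : 0 ≤ y := by rw [hy]; linarith
  have hy1 : y ≤ 1 := by rw [hy]; nlinarith
  have hyk : y / k ∈ Set.Icc (0:ℝ) (1 / (k:ℝ)) :=
    ⟨by positivity, div_le_div_of_nonneg_right hy1 hkR.le⟩
  have hxfacts : ∀ j ∈ Finset.Icc 1 (k-1),
      1/((j:ℝ)+1) < x j ∧ x j ≤ 1/(j:ℝ) ∧ 0 ≤ x j ∧ x j ≤ 1 := by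
    intro j hj
    rw [Finset.mem_Icc] at hj
    have hj1 : (1:ℝ) ≤ j := by exact_mod_cast hj.1
    have hjk : (j:ℝ) ≤ k := by exact_mod_cast (by omega : j ≤ k)
    have hjε : (j:ℝ) * ε ≤ 1 := by
      calc (j:ℝ) * ε ≤ (j:ℝ) * (1/k) := mul_le_mul_of_nonneg_left hεk (by linarith)
        _ = (j:ℝ)/k := by ring
        _ ≤ 1 := by rw [div_le_one hkR]; exact hjk
    have h1 : 1/((j:ℝ)+1) < x j := by
      rw [hx, div_lt_div_iff₀ (by linarith) (by linarith)]; nlinarith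
    have h2 : x j ≤ 1/(j:ℝ) := by
      rw [hx, div_le_div_iff₀ (by linarith) (by linarith)]; nlinarith
    exact ⟨h1, h2, le_trans (by positivity) (le_of_lt h1),
      h2.trans (by rw [div_le_one (by linarith)]; exact hj1)⟩
  set L : List ℝ :=
    ((Finset.Icc 1 (k-1)).toList.flatMap fun j => List.replicate (z j) (x j))
      ++ List.replicate k (y / k) with hL
  have hmem : ∀ a ∈ L, a ∈ Set.Icc (0:ℝ) 1 := by
    intro a ha
    rw [hL, List.mem_append] at ha
    rcases ha with h | h
    · rw [List.mem_flatMap] at h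
      obtain ⟨j, hj, hrep⟩ := h
      rw [Finset.mem_toList] at hj
      rw [List.mem_replicate] at hrep
      obtain ⟨-, -, h3, h4⟩ := hxfacts j hj
      rw [hrep.2]; exact ⟨h3, h4⟩
    · rw [List.mem_replicate] at h
      rw [h.2]
      exact ⟨hyk.1, hyk.2.trans (by rw [div_le_one hkR]; exact_mod_cast (by omega : 1 ≤ k))⟩
  have hLsum : L.sum = 1 := by
    rw [hL, List.sum_append, flatMap_sum]
    have h1 : ((Finset.Icc 1 (k-1)).toList.map fun j => (List.replicate (z j) (x j)).sum).sum
        = (1+ε) * c := by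
      rw [show (fun j => (List.replicate (z j) (x j)).sum) = fun j => (z j : ℝ) * x j by
        funext j; rw [List.sum_replicate, nsmul_eq_mul]]
      rw [map_toList_sum]
      rw [hc]; unfold IPcost
      rw [Finset.mul_sum]
      exact Finset.sum_congr rfl (fun j _ => by rw [hx]; ring)
    have h2 : (List.replicate k (y/k)).sum = y := by
      rw [List.sum_replicate, nsmul_eq_mul]
      field_simp
    rw [h1, h2, hy]; ring
  have hfsum : (L.map f).sum = IPscore k μ z - μ * ε * c := by
    rw [hL, List.map_append, List.sum_append, List.map_flatMap]
    have h1 : ((Finset.Icc 1 (k-1)).toList.flatMap fun j => (List.replicate (z j) (x j)).map f).sum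
        = ∑ j ∈ Finset.Icc 1 (k-1), (z j : ℝ) * (1/(j:ℝ)) := by
      rw [flatMap_sum, ← map_toList_sum]
      congr 1
      apply List.map_congr_left
      intro j hj
      rw [Finset.mem_toList, Finset.mem_Icc] at hj
      obtain ⟨hx1, hx2, -, -⟩ := hxfacts j (Finset.mem_Icc.2 hj)
      rw [List.map_replicate, hf1 j hj.1 hj.2 (x j) ⟨hx1, hx2⟩,
        List.sum_replicate, nsmul_eq_mul]
    have h2 : ((List.replicate k (y/k)).map f).sum = μ * y := by
      rw [List.map_replicate, hf2 (y/k) hyk, List.sum_replicate, nsmul_eq_mul]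
      field_simp
    rw [h1, h2, score_split, ← hc, hy]
    ring
  refine ⟨L.length, fun i => L.get i, fun i => hmem _ (L.get_mem i), ?_, ?_⟩
  · have := sum_fin_get id L
    simp only [id] at this
    rw [this, List.map_id, hLsum]
  · rw [sum_fin_get f L, hfsum]

private lemma score_bound (k : ℕ) (μ : ℝ) (z : ℕ → ℕ) (hμ0 : 0 ≤ μ)
    (hzc : IPcost k z < 1) : IPscore k μ z ≤ μ + k := by
  have hterm : ∀ j ∈ Finset.Icc 1 (k-1), (z j:ℝ) * (1/(j:ℝ) - μ/((j:ℝ)+1)) ≤ 1 := by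
    intro j hj
    have hjm := Finset.mem_Icc.1 hj
    have hj1 : (1:ℝ) ≤ j := by exact_mod_cast hjm.1
    have hzj : (z j:ℝ)/((j:ℝ)+1) < 1 :=
      lt_of_le_of_lt (Finset.single_le_sum (f := fun j => (z j:ℝ)/((j:ℝ)+1))
        (fun i _ => by positivity) hj) hzc
    have h1 : (z j:ℝ) < (j:ℝ) + 1 := by rw [div_lt_one (by linarith)] at hzj; exact hzj
    have h2 : (z j:ℝ) ≤ j := by
      have : z j < j + 1 := by exact_mod_cast h1
      exact_mod_cast Nat.lt_succ_iff.mp this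
    have h3 : 0 ≤ μ/((j:ℝ)+1) := by positivity
    have h4 : (z j:ℝ) * (1/(j:ℝ) - μ/((j:ℝ)+1)) ≤ (z j:ℝ) * (1/(j:ℝ)) := by
      apply mul_le_mul_of_nonneg_left (by linarith) (Nat.cast_nonneg _)
    have h5 : (z j:ℝ) * (1/(j:ℝ)) ≤ (j:ℝ) * (1/(j:ℝ)) :=
      mul_le_mul_of_nonneg_right h2 (by positivity)
    have h6 : (j:ℝ) * (1/(j:ℝ)) = 1 := by field_simp
    linarith
  unfold IPscore
  have := Finset.sum_le_sum hterm
  rw [Finset.sum_const, nsmul_eq_mul, mul_one] at this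
  have hcard : ((Finset.Icc 1 (k-1)).card : ℝ) ≤ k := by
    rw [Nat.card_Icc]
    exact_mod_cast (by omega : k - 1 + 1 - 1 ≤ k)
  linarith

private lemma rounding (k : ℕ) (μ : ℝ) (f : ℝ → ℝ)
    (hk : 2 ≤ k) (hμ0 : 0 ≤ μ)
    (hf1 : ∀ j : ℕ, 1 ≤ j → j ≤ k - 1 →
      ∀ x ∈ Set.Ioc (1 / ((j : ℝ) + 1)) (1 / (j : ℝ)), f x = 1 / (j : ℝ))
    (hf2 : ∀ x ∈ Set.Icc (0 : ℝ) (1 / (k : ℝ)), f x = μ * x)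
    (n : ℕ) (X : Fin n → ℝ) (hX : ∀ i, X i ∈ Set.Icc (0:ℝ) 1) (hs : ∑ i, X i ≤ 1) :
    ∃ z : ℕ → ℕ, IPcost k z < 1 ∧ ∑ i, f (X i) ≤ IPscore k μ z := by
  classical
  have hkR : (0:ℝ) < k := by exact_mod_cast (by omega : 0 < k)
  have hXnn : ∀ i, 0 ≤ X i := fun i => (hX i).1
  set b : Fin n → ℕ := fun i => ⌊1 / X i⌋₊ with hb
  set S : Finset (Fin n) := Finset.univ.filter (fun i => 1/(k:ℝ) < X i) with hS
  set z : ℕ → ℕ := fun j => (S.filter (fun i => b i = j)).card with hz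
  have hSfact : ∀ i ∈ S, 1 ≤ b i ∧ b i ≤ k - 1 ∧ 1/((b i:ℝ)+1) < X i ∧ X i ≤ 1/(b i:ℝ) := by
    intro i hi
    rw [hS, Finset.mem_filter] at hi
    have hxk : 1/(k:ℝ) < X i := hi.2
    have hx0 : 0 < X i := lt_trans (by positivity) hxk
    have hx1 : X i ≤ 1 := (hX i).2
    have hxx : X i * (1 / X i) = 1 := by field_simp
    have hinv1 : (1:ℝ) ≤ 1 / X i := by rw [le_div_iff₀ hx0]; linarith
    have hinvk : 1 / X i < (k:ℝ) := by
      rw [div_lt_iff₀ hx0]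
      rw [div_lt_iff₀ hkR] at hxk
      nlinarith
    have h1 : 1 ≤ b i := Nat.le_floor (by exact_mod_cast hinv1)
    have h2 : b i < k := by
      have := (Nat.floor_lt (by positivity : (0:ℝ) ≤ 1 / X i)).2 (by exact_mod_cast hinvk)
      exact_mod_cast this
    have hfl : (b i : ℝ) ≤ 1 / X i := Nat.floor_le (by positivity)
    have hfl2 : 1 / X i < (b i:ℝ) + 1 := Nat.lt_floor_add_one _
    have hb1 : (1:ℝ) ≤ b i := by exact_mod_cast h1
    refine ⟨h1, by omega, ?_, ?_⟩
    · rw [div_lt_iff₀ (by linarith : (0:ℝ) < (b i:ℝ)+1)]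
      nlinarith [mul_lt_mul_of_pos_left hfl2 hx0]
    · rw [le_div_iff₀ (by linarith : (0:ℝ) < (b i:ℝ))]
      nlinarith [mul_le_mul_of_nonneg_left hfl hx0.le]
  have hmaps : ∀ i ∈ S, b i ∈ Finset.Icc 1 (k-1) :=
    fun i hi => Finset.mem_Icc.2 ⟨(hSfact i hi).1, (hSfact i hi).2.1⟩
  have hfib : ∀ g : Fin n → ℝ,
      ∑ j ∈ Finset.Icc 1 (k-1), ∑ i ∈ S.filter (fun i => b i = j), g i = ∑ i ∈ S, g i :=
    fun g => Finset.sum_fiberwise_of_maps_to hmaps g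
  have hcost_eq : IPcost k z = ∑ i ∈ S, 1/((b i:ℝ)+1) := by
    unfold IPcost
    rw [← hfib (fun i => 1/((b i:ℝ)+1))]
    apply Finset.sum_congr rfl
    intro j hj
    calc (z j:ℝ)/((j:ℝ)+1) = (S.filter (fun i => b i = j)).card • (1/((j:ℝ)+1)) := by
          rw [nsmul_eq_mul, hz]; ring
      _ = ∑ _i ∈ S.filter (fun i => b i = j), 1/((j:ℝ)+1) := (Finset.sum_const _).symm
      _ = ∑ i ∈ S.filter (fun i => b i = j), 1/((b i:ℝ)+1) :=
          Finset.sum_congr rfl (fun i hi => by rw [(Finset.mem_filter.1 hi).2])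
  have hSX_le : ∑ i ∈ S, X i ≤ 1 :=
    le_trans (Finset.sum_le_sum_of_subset_of_nonneg (Finset.subset_univ S)
      (fun i _ _ => hXnn i)) hs
  have hcost_le_SX : IPcost k z ≤ ∑ i ∈ S, X i := by
    rw [hcost_eq]
    exact Finset.sum_le_sum (fun i hi => le_of_lt (hSfact i hi).2.2.1)
  have hcost1 : IPcost k z < 1 := by
    rcases S.eq_empty_or_nonempty with h | h
    · rw [hcost_eq, h]; simp
    · refine lt_of_lt_of_le ?_ hSX_le
      rw [hcost_eq]
      exact Finset.sum_lt_sum_of_nonempty h (fun i hi => (hSfact i hi).2.2.1)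
  refine ⟨z, hcost1, ?_⟩
  have hfS : ∑ i ∈ S, f (X i) = ∑ j ∈ Finset.Icc 1 (k-1), (z j:ℝ) * (1/(j:ℝ)) := by
    rw [← hfib (fun i => f (X i))]
    apply Finset.sum_congr rfl
    intro j hj
    have hjm := Finset.mem_Icc.1 hj
    calc ∑ i ∈ S.filter (fun i => b i = j), f (X i)
        = ∑ _i ∈ S.filter (fun i => b i = j), (1/(j:ℝ)) := by
          apply Finset.sum_congr rfl
          intro i hi
          rw [Finset.mem_filter] at hi
          obtain ⟨-, -, h3, h4⟩ := hSfact i hi.1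
          rw [hi.2] at h3 h4
          exact hf1 j hjm.1 hjm.2 (X i) ⟨h3, h4⟩
      _ = (z j:ℝ) * (1/(j:ℝ)) := by rw [Finset.sum_const, nsmul_eq_mul, hz]
  have hfT : ∑ i ∈ Sᶜ, f (X i) = μ * ∑ i ∈ Sᶜ, X i := by
    rw [Finset.mul_sum]
    apply Finset.sum_congr rfl
    intro i hi
    rw [Finset.mem_compl, hS, Finset.mem_filter] at hi
    push_neg at hi
    exact hf2 (X i) ⟨hXnn i, hi (Finset.mem_univ i)⟩
  have hT_le : ∑ i ∈ Sᶜ, X i ≤ 1 - ∑ i ∈ S, X i := by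
    have := Finset.sum_add_sum_compl S X
    linarith
  have hsplit := Finset.sum_add_sum_compl S (fun i => f (X i))
  rw [score_split]
  have hμT : μ * ∑ i ∈ Sᶜ, X i ≤ μ * (1 - IPcost k z) :=
    mul_le_mul_of_nonneg_left (by linarith) hμ0
  calc ∑ i, f (X i) = ∑ i ∈ S, f (X i) + ∑ i ∈ Sᶜ, f (X i) := hsplit.symm
    _ ≤ (∑ j ∈ Finset.Icc 1 (k-1), (z j:ℝ) * (1/(j:ℝ))) + μ * (1 - IPcost k z) := by
        rw [hfS, hfT]; linarith

theorem IP_le_LP (k : ℕ) (μ : ℝ) (f : ℝ → ℝ)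
    (hk : 2 ≤ k) (hμ : μ ∈ Set.Icc (0 : ℝ) k)
    (hf1 : ∀ j : ℕ, 1 ≤ j → j ≤ k - 1 →
      ∀ x ∈ Set.Ioc (1 / ((j : ℝ) + 1)) (1 / (j : ℝ)), f x = 1 / (j : ℝ))
    (hf2 : ∀ x ∈ Set.Icc (0 : ℝ) (1 / (k : ℝ)), f x = μ * x) :
    (∀ z : ℕ → ℕ, IPcost k z < 1 →
      ∀ ε : ℝ, 0 < ε → ε ≤ 1 / IPcost k z - 1 →
        ∃ n : ℕ, ∃ X : Fin n → ℝ,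
          (∀ i, X i ∈ Set.Icc (0 : ℝ) 1) ∧ (∑ i, X i) ≤ 1 ∧
          IPscore k μ z - μ * ε * IPcost k z ≤ ∑ i, f (X i)) ∧
    IPopt k μ ≤ LPopt f ∧ LPopt f = IPopt k μ := by
  classical
  obtain ⟨hμ0, hμk⟩ := hμ
  have hkR : (0:ℝ) < k := by exact_mod_cast (by omega : 0 < k)
  -- bounded above
  have bddIP : BddAbove {s | ∃ z : ℕ → ℕ, IPcost k z < 1 ∧ s = IPscore k μ z} := by
    refine ⟨μ + k, ?_⟩
    rintro s ⟨z, h1, rfl⟩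
    exact score_bound k μ z hμ0 h1
  have bddLP : BddAbove {s | ∃ n : ℕ, ∃ X : Fin n → ℝ,
      (∀ i, X i ∈ Set.Icc (0 : ℝ) 1) ∧ (∑ i, X i) ≤ 1 ∧ s = ∑ i, f (X i)} := by
    refine ⟨μ + k, ?_⟩
    rintro s ⟨n, X, h1, h2, rfl⟩
    obtain ⟨z, hc, hle⟩ := rounding k μ f hk hμ0 hf1 hf2 n X h1 h2
    exact le_trans hle (score_bound k μ z hμ0 hc)
  have hIPmem : μ ∈ {s | ∃ z : ℕ → ℕ, IPcost k z < 1 ∧ s = IPscore k μ z} := by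
    refine ⟨fun _ => 0, ?_, ?_⟩ <;> simp [IPcost, IPscore]
  have hLP0 : (0:ℝ) ∈ {s | ∃ n : ℕ, ∃ X : Fin n → ℝ,
      (∀ i, X i ∈ Set.Icc (0 : ℝ) 1) ∧ (∑ i, X i) ≤ 1 ∧ s = ∑ i, f (X i)} :=
    ⟨0, fun i => i.elim0, fun i => i.elim0, by simp, by simp⟩
  have hLPopt0 : 0 ≤ LPopt f := le_csSup bddLP hLP0
  have hIPopt0 : 0 ≤ IPopt k μ := le_trans hμ0 (le_csSup bddIP hIPmem)
  -- part 1
  have part1 : ∀ z : ℕ → ℕ, IPcost k z < 1 →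
      ∀ ε : ℝ, 0 < ε → ε ≤ 1 / IPcost k z - 1 →
        ∃ n : ℕ, ∃ X : Fin n → ℝ,
          (∀ i, X i ∈ Set.Icc (0 : ℝ) 1) ∧ (∑ i, X i) ≤ 1 ∧
          IPscore k μ z - μ * ε * IPcost k z ≤ ∑ i, f (X i) := by
    intro z hzc ε hε hεle
    set c := IPcost k z with hc
    have hc0 : 0 ≤ c := cost_nonneg k z
    have hcpos : 0 < c := by
      rcases eq_or_lt_of_le hc0 with h | h
      · rw [← h] at hεle; norm_num at hεle; linarith
      · exact h
    set ε' := min ε (1/(k:ℝ)) with hε'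
    have hε'0 : 0 < ε' := lt_min hε (by positivity)
    have hε'k : ε' ≤ 1/(k:ℝ) := min_le_right _ _
    have hε'ε : ε' ≤ ε := min_le_left _ _
    have hinv : (1 + ε) * c ≤ 1 := by
      have h1 : 1 + ε ≤ 1/c := by linarith
      calc (1+ε)*c ≤ (1/c)*c := mul_le_mul_of_nonneg_right h1 hc0
        _ = 1 := by field_simp
    have h1c : (1+ε') * c ≤ 1 := le_trans (mul_le_mul_of_nonneg_right (by linarith) hc0) hinv
    obtain ⟨n, X, hX, hs, heq⟩ := construct k μ f hk hμ0 hf1 hf2 z ε' hε'0 hε'k h1c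
    refine ⟨n, X, hX, hs, ?_⟩
    rw [heq]
    have : μ * ε' * c ≤ μ * ε * c := by
      apply mul_le_mul_of_nonneg_right (mul_le_mul_of_nonneg_left hε'ε hμ0) hc0
    linarith
  refine ⟨part1, ?_, ?_⟩
  -- part 2 : IPopt ≤ LPopt
  · apply Real.sSup_le ?_ hLPopt0
    rintro s ⟨z, hzc, rfl⟩
    set c := IPcost k z with hc
    have hc0 : 0 ≤ c := cost_nonneg k z
    apply le_of_forall_pos_le_add
    intro δ hδ
    have hμc : (0:ℝ) ≤ μ * c := mul_nonneg hμ0 hc0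
    set ε' := min (1/(k:ℝ)) (min ((1-c)/(1+c)) (δ/(μ*c+1))) with hε'
    have hε'0 : 0 < ε' :=
      lt_min (by positivity) (lt_min (div_pos (by linarith) (by linarith))
        (div_pos hδ (by linarith)))
    have hε'k : ε' ≤ 1/(k:ℝ) := min_le_left _ _
    have h1c : (1+ε') * c ≤ 1 := by
      have h1 : ε' ≤ (1-c)/(1+c) := le_trans (min_le_right _ _) (min_le_left _ _)
      have h3 : (1-c)/(1+c) * c ≤ 1 - c := by
        rw [div_mul_eq_mul_div, div_le_iff₀ (by linarith)]
        nlinarith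
      have h4 : ε' * c ≤ (1-c)/(1+c) * c := mul_le_mul_of_nonneg_right h1 hc0
      nlinarith
    obtain ⟨n, X, hX, hs, heq⟩ := construct k μ f hk hμ0 hf1 hf2 z ε' hε'0 hε'k h1c
    have hmem : IPscore k μ z - μ * ε' * c ∈ {s | ∃ n : ℕ, ∃ X : Fin n → ℝ,
        (∀ i, X i ∈ Set.Icc (0 : ℝ) 1) ∧ (∑ i, X i) ≤ 1 ∧ s = ∑ i, f (X i)} :=
      ⟨n, X, hX, hs, heq.symm⟩
    have hle := le_csSup bddLP hmem
    have hsmall : μ * ε' * c ≤ δ := by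
      have h1 : ε' ≤ δ/(μ*c+1) := le_trans (min_le_right _ _) (min_le_right _ _)
      have h2 : (μ*c) * (δ/(μ*c+1)) ≤ δ := by
        rw [mul_comm, div_mul_eq_mul_div, div_le_iff₀ (by linarith)]
        nlinarith
      nlinarith [mul_le_mul_of_nonneg_left h1 hμc]
    have : IPscore k μ z - μ * ε' * c ≤ LPopt f := hle
    linarith
  -- part 3 : equality
  · have h3 : LPopt f ≤ IPopt k μ := by
      apply Real.sSup_le ?_ hIPopt0
      rintro s ⟨n, X, hX, hs, rfl⟩
      obtain ⟨z, hzc, hle⟩ := rounding k μ f hk hμ0 hf1 hf2 n X hX hs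
      exact le_trans hle (le_csSup bddIP ⟨z, hzc, rfl⟩)
    have h2 : IPopt k μ ≤ LPopt f := by
      apply Real.sSup_le ?_ hLPopt0
      rintro s ⟨z, hzc, rfl⟩
      set c := IPcost k z with hc
      have hc0 : 0 ≤ c := cost_nonneg k z
      apply le_of_forall_pos_le_add
      intro δ hδ
      have hμc : (0:ℝ) ≤ μ * c := mul_nonneg hμ0 hc0
      set ε' := min (1/(k:ℝ)) (min ((1-c)/(1+c)) (δ/(μ*c+1))) with hε'
      have hε'0 : 0 < ε' :=
        lt_min (by positivity) (lt_min (div_pos (by linarith) (by linarith))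
          (div_pos hδ (by linarith)))
      have hε'k : ε' ≤ 1/(k:ℝ) := min_le_left _ _
      have h1c : (1+ε') * c ≤ 1 := by
        have h1 : ε' ≤ (1-c)/(1+c) := le_trans (min_le_right _ _) (min_le_left _ _)
        have h3 : (1-c)/(1+c) * c ≤ 1 - c := by
          rw [div_mul_eq_mul_div, div_le_iff₀ (by linarith)]
          nlinarith
        have h4 : ε' * c ≤ (1-c)/(1+c) * c := mul_le_mul_of_nonneg_right h1 hc0
        nlinarith
      obtain ⟨n, X, hX, hs, heq⟩ := construct k μ f hk hμ0 hf1 hf2 z ε' hε'0 hε'k h1c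
      have hmem : IPscore k μ z - μ * ε' * c ∈ {s | ∃ n : ℕ, ∃ X : Fin n → ℝ,
          (∀ i, X i ∈ Set.Icc (0 : ℝ) 1) ∧ (∑ i, X i) ≤ 1 ∧ s = ∑ i, f (X i)} :=
        ⟨n, X, hX, hs, heq.symm⟩
      have hle := le_csSup bddLP hmem
      have hsmall : μ * ε' * c ≤ δ := by
        have h1 : ε' ≤ δ/(μ*c+1) := le_trans (min_le_right _ _) (min_le_right _ _)
        have h2 : (μ*c) * (δ/(μ*c+1)) ≤ δ := by
          rw [mul_comm, div_mul_eq_mul_div, div_le_iff₀ (by linarith)]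
          nlinarith
        nlinarith [mul_le_mul_of_nonneg_left h1 hμc]
      have hbridge : IPscore k μ z - μ * ε' * c ≤ LPopt f := hle
      linarith
    exact le_antisymm h3 h2
end

section
/- Let z^(q) be the 0-1 vector with z_i = 1 iff i ∈ {r_1, ..., r_q} (where r_j are the harmonic numbers and r_q ≤ k−1). Then z^(q) is feasible for IP(k, μ), with cost(z^(q), k) = 1 − 1/r_{q+1}, and score(z^(q), k, μ) = S_{q+1} + (μ−1)/r_{q+1}, where S_t = ∑_{j=1}^t 1/r_j. -/
theorem greedy_solution_props (k : ℕ) (μ : ℝ) (r : ℕ → ℕ) (q : ℕ)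
    (hk : 2 ≤ k)
    (hr1 : r 1 = 1) (hrec : ∀ j ≥ 1, r (j + 1) = r j * (r j + 1))
    (hq : 1 ≤ q) (hrq : r q ≤ k - 1) :
    IPcost k (fun i => if i ∈ (Finset.Icc 1 q).image r then 1 else 0)
      = 1 - 1 / (r (q + 1) : ℝ) ∧
    IPcost k (fun i => if i ∈ (Finset.Icc 1 q).image r then 1 else 0) < 1 ∧
    IPscore k μ (fun i => if i ∈ (Finset.Icc 1 q).image r then 1 else 0)
      = (∑ j ∈ Finset.Icc 1 (q + 1), 1 / (r j : ℝ)) + (μ - 1) / (r (q + 1) : ℝ) := by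
  have hpos : ∀ j, 1 ≤ j → 1 ≤ r j := by
    intro j hj
    induction j, hj using Nat.le_induction with
    | base => simp [hr1]
    | succ n hn ih => rw [hrec n hn]; nlinarith
  have hlt : ∀ j, 1 ≤ j → r j < r (j + 1) := by
    intro j hj
    rw [hrec j hj]
    have := hpos j hj
    nlinarith
  have hmono : ∀ a b, 1 ≤ a → a ≤ b → r a ≤ r b := by
    intro a b ha hab
    induction b, hab using Nat.le_induction with
    | base => exact le_refl _
    | succ n hn ih => exact ih.trans (hlt n (ha.trans hn)).le
  have hsm : ∀ a b, 1 ≤ a → a < b → r a < r b := fun a b ha hab =>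
    lt_of_lt_of_le (hlt a ha) (hmono (a + 1) b (by omega) hab)
  have hinj : Set.InjOn r (Finset.Icc 1 q : Finset ℕ) := by
    intro x hx y hy hxy
    simp only [Finset.coe_Icc, Set.mem_Icc] at hx hy
    rcases lt_trichotomy x y with h | h | h
    · exact absurd hxy (hsm x y hx.1 h).ne
    · exact h
    · exact absurd hxy.symm (hsm y x hy.1 h).ne
  have hsub : (Finset.Icc 1 q).image r ⊆ Finset.Icc 1 (k - 1) := by
    intro x hx
    obtain ⟨t, ht, rfl⟩ := Finset.mem_image.mp hx
    simp only [Finset.mem_Icc] at ht ⊢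
    exact ⟨hpos t ht.1, (hmono t q ht.1 ht.2).trans hrq⟩
  have hrpos : ∀ j, 1 ≤ j → (0:ℝ) < (r j : ℝ) := by
    intro j hj
    exact_mod_cast Nat.lt_of_lt_of_le Nat.zero_lt_one (hpos j hj)
  have htel : ∀ m, ∑ t ∈ Finset.Icc 1 m, (1:ℝ) / ((r t : ℝ) + 1)
      = 1 - 1 / (r (m + 1) : ℝ) := by
    intro m
    induction m with
    | zero => simp [hr1]
    | succ n ih =>
      rw [Finset.sum_Icc_succ_top (by omega : 1 ≤ n + 1), ih,
        hrec (n + 1) (by omega)]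
      have h1 := hrpos (n + 1) (by omega)
      push_cast
      field_simp
      ring
  -- reduce the sums over Icc 1 (k-1) to sums over Icc 1 q
  have key : ∀ f : ℕ → ℝ,
      ∑ i ∈ Finset.Icc 1 (k - 1),
        (((if i ∈ (Finset.Icc 1 q).image r then 1 else 0 : ℕ)) : ℝ) * f i
      = ∑ t ∈ Finset.Icc 1 q, f (r t) := by
    intro f
    have : ∀ i ∈ Finset.Icc 1 (k - 1),
        (((if i ∈ (Finset.Icc 1 q).image r then 1 else 0 : ℕ)) : ℝ) * f i
        = if i ∈ (Finset.Icc 1 q).image r then f i else 0 := by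
      intro i _
      split <;> simp
    rw [Finset.sum_congr rfl this, Finset.sum_ite_mem,
      Finset.inter_eq_right.mpr hsub, Finset.sum_image (fun x hx y hy h => hinj hx hy h)]
  have hcost : IPcost k (fun i => if i ∈ (Finset.Icc 1 q).image r then 1 else 0)
      = 1 - 1 / (r (q + 1) : ℝ) := by
    unfold IPcost
    beta_reduce
    have e : ∀ i ∈ Finset.Icc 1 (k - 1),
        (((if i ∈ (Finset.Icc 1 q).image r then 1 else 0 : ℕ)) : ℝ) / ((i : ℝ) + 1)
        = (((if i ∈ (Finset.Icc 1 q).image r then 1 else 0 : ℕ)) : ℝ) * (1 / ((i : ℝ) + 1)) :=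
      fun i _ => by rw [mul_one_div]
    rw [Finset.sum_congr rfl e, key (fun i => 1 / ((i : ℝ) + 1))]
    exact htel q
  refine ⟨hcost, ?_, ?_⟩
  · rw [hcost]
    have := hrpos (q + 1) (by omega)
    have : 0 < 1 / (r (q + 1) : ℝ) := by positivity
    linarith
  · unfold IPscore
    rw [key (fun i => 1 / (i : ℝ) - μ / ((i : ℝ) + 1))]
    have hs : ∑ t ∈ Finset.Icc 1 q, (1 / (r t : ℝ) - μ / ((r t : ℝ) + 1))
        = (∑ t ∈ Finset.Icc 1 q, 1 / (r t : ℝ))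
          - μ * ∑ t ∈ Finset.Icc 1 q, (1:ℝ) / ((r t : ℝ) + 1) := by
      rw [Finset.sum_sub_distrib, Finset.mul_sum]
      congr 1
      exact Finset.sum_congr rfl fun t _ => by rw [mul_one_div]
    rw [hs, htel q, Finset.sum_Icc_succ_top (by omega : 1 ≤ q + 1)]
    ring
end

section
/- (Closed form for the harmonic knapsack IP) Let k ≥ 2 and 1 ≤ μ < 2. Let Q = max{j ≥ 1 : r_j ≤ ⌈1/max(μ−1, 1/k)⌉ − 1}. Then the optimum of IP(k, μ) equals ∑_{j=1}^{Q+1} 1/r_j + (μ−1)/r_{Q+1}. -/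
open Finset

section helpers
variable (r : ℕ → ℕ)

lemma rpos (hr1 : r 1 = 1) (hrec : ∀ j ≥ 1, r (j + 1) = r j * (r j + 1)) :
    ∀ j, 1 ≤ j → 1 ≤ r j := by
  intro j hj
  induction j, hj using Nat.le_induction with
  | base => omega
  | succ n hn ih => rw [hrec n hn]; nlinarith

lemma rmono (hr1 : r 1 = 1) (hrec : ∀ j ≥ 1, r (j + 1) = r j * (r j + 1)) :
    ∀ i j, 1 ≤ i → i ≤ j → r i ≤ r j := by
  intro i j hi hij
  induction j, hij using Nat.le_induction with
  | base => exact le_refl _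
  | succ n hn ih =>
    have h1 : 1 ≤ n := le_trans hi hn
    have := rpos r hr1 hrec n h1
    rw [hrec n h1]; nlinarith

lemma rtel (hr1 : r 1 = 1) (hrec : ∀ j ≥ 1, r (j + 1) = r j * (r j + 1)) :
    ∀ n, (∑ i ∈ Icc 1 n, (1 : ℝ) / (r i + 1)) = 1 - 1 / (r (n + 1)) := by
  intro n
  induction n with
  | zero => simp [hr1]
  | succ n ih =>
    rw [Finset.sum_Icc_succ_top (by omega : 1 ≤ n + 1), ih, hrec (n+1) (by omega)]
    have h1 : (1 : ℝ) ≤ (r (n+1) : ℝ) := by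
      exact_mod_cast rpos r hr1 hrec (n+1) (by omega)
    have h0 : (0 : ℝ) < (r (n+1) : ℝ) := by linarith
    push_cast
    field_simp
    ring

end helpers

section key
variable (k : ℕ) (μ : ℝ) (r : ℕ → ℕ) (Q : ℕ)

lemma keyfacts (hk : 2 ≤ k) (hμ1 : 1 ≤ μ)
    (hr1 : r 1 = 1) (hrec : ∀ j ≥ 1, r (j + 1) = r j * (r j + 1))
    (hQ : IsGreatest {j : ℕ | 1 ≤ j ∧
      r j ≤ ⌈1 / max (μ - 1) (1 / (k : ℝ))⌉₊ - 1} Q) :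
    (1 ≤ Q) ∧ (r Q + 1 ≤ k) ∧ (∀ j, 1 ≤ j → j ≤ Q → μ - 1 < 1 / (r j : ℝ)) ∧
      (∀ a : ℕ, 2 ≤ a → a ≤ k → μ - 1 < 1 / ((a : ℝ) - 1) → a ≤ r (Q + 1)) := by
  set m : ℝ := max (μ - 1) (1 / (k : ℝ)) with hm
  have hkpos : (0 : ℝ) < (k : ℝ) := by positivity
  have hmpos : 0 < m := lt_max_of_lt_right (by positivity)
  have hQ1 : 1 ≤ Q := hQ.1.1
  have hrQpos : 1 ≤ r Q := rpos r hr1 hrec Q hQ1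
  set N : ℕ := ⌈1 / m⌉₊ with hN
  have hrQN : r Q ≤ N - 1 := hQ.1.2
  have hN1 : 1 ≤ N := by omega
  -- (N:ℝ) < 1/m + 1
  have hceil : (N : ℝ) < 1 / m + 1 := Nat.ceil_lt_add_one (by positivity)
  have hrQlt : (r Q : ℝ) < 1 / m := by
    have : (r Q : ℝ) ≤ (N : ℝ) - 1 := by
      have : (r Q : ℝ) ≤ ((N - 1 : ℕ) : ℝ) := by exact_mod_cast hrQN
      rw [Nat.cast_sub hN1] at this; simpa using this
    linarith
  have hrQR : (1 : ℝ) ≤ (r Q : ℝ) := by exact_mod_cast hrQpos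
  have hmlt : m < 1 / (r Q : ℝ) := by
    rw [lt_div_iff₀ (by linarith)]
    calc m * (r Q : ℝ) < m * (1 / m) := by
          apply mul_lt_mul_of_pos_left _ hmpos
          calc (r Q : ℝ) < 1 / m := hrQlt
            _ = 1/m := rfl
      _ = 1 := by field_simp
  have hν : ∀ j, 1 ≤ j → j ≤ Q → μ - 1 < 1 / (r j : ℝ) := by
    intro j hj hjQ
    have hmono : r j ≤ r Q := rmono r hr1 hrec j Q hj hjQ
    have hjpos : 1 ≤ r j := rpos r hr1 hrec j hj
    have h1 : (1:ℝ) / (r Q : ℝ) ≤ 1 / (r j : ℝ) := by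
      apply one_div_le_one_div_of_le
      · exact_mod_cast hjpos
      · exact_mod_cast hmono
    have h2 : μ - 1 ≤ m := le_max_left _ _
    linarith
  have hrQk : r Q + 1 ≤ k := by
    have h1 : (1:ℝ) / (k:ℝ) ≤ m := le_max_right _ _
    have h2 : (1:ℝ) / (k:ℝ) < 1 / (r Q : ℝ) := lt_of_le_of_lt h1 hmlt
    have : (r Q : ℝ) < (k : ℝ) := by
      rw [div_lt_div_iff₀ hkpos (by linarith)] at h2
      linarith
    have : r Q < k := by exact_mod_cast this
    omega
  refine ⟨hQ1, hrQk, hν, ?_⟩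
  intro a ha2 hak hμa
  by_contra hcon
  push_neg at hcon
  have hrQ1pos : 1 ≤ r (Q + 1) := rpos r hr1 hrec (Q+1) (by omega)
  have haR : (r (Q+1) : ℝ) + 1 ≤ (a : ℝ) := by exact_mod_cast hcon
  have hrQ1R : (1:ℝ) ≤ (r (Q+1) : ℝ) := by exact_mod_cast hrQ1pos
  -- m < 1 / r (Q+1)
  have hmlt2 : m < 1 / (r (Q+1) : ℝ) := by
    rw [hm]
    apply max_lt
    · calc μ - 1 < 1 / ((a:ℝ) - 1) := hμa
        _ ≤ 1 / (r (Q+1) : ℝ) := by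
          apply one_div_le_one_div_of_le (by linarith) (by linarith)
    · have hka : (a : ℝ) ≤ (k : ℝ) := by exact_mod_cast hak
      calc (1:ℝ)/(k:ℝ) ≤ 1/(a:ℝ) := by
            apply one_div_le_one_div_of_le (by linarith) hka
        _ < 1 / (r (Q+1):ℝ) := by
            apply div_lt_div_of_pos_left one_pos (by linarith) (by linarith)
  have : (r (Q+1) : ℝ) < 1 / m := by
    rw [lt_div_iff₀ hmpos]
    rw [lt_div_iff₀ (by linarith)] at hmlt2
    linarith [mul_comm m (r (Q+1) : ℝ)]
  have hlt : r (Q+1) < N := by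
    rw [hN]; exact Nat.lt_ceil.mpr this
  have : Q + 1 ≤ Q := hQ.2 ⟨by omega, by omega⟩
  omega

end key

section dprime
variable (k : ℕ) (μ : ℝ) (r : ℕ → ℕ) (Q : ℕ)

lemma Dprime (hμ1 : 1 ≤ μ)
    (hr1 : r 1 = 1) (hrec : ∀ j ≥ 1, r (j + 1) = r j * (r j + 1))
    (hν : ∀ j, 1 ≤ j → j ≤ Q → μ - 1 < 1 / (r j : ℝ))
    (hL4 : ∀ a : ℕ, 2 ≤ a → a ≤ k → μ - 1 < 1 / ((a : ℝ) - 1) → a ≤ r (Q + 1)) :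
    ∀ A : Finset ℕ, ∀ q, 1 ≤ q → q ≤ Q + 1 →
      (∀ a ∈ A, 2 ≤ a ∧ a ≤ k ∧ μ - 1 < 1 / ((a : ℝ) - 1)) →
      (∑ a ∈ A, (1 : ℝ) / a) < 1 / (r q : ℝ) →
      (∑ a ∈ A, (1 / ((a : ℝ) - 1) - μ / a)) ≤
        ∑ j ∈ Icc q Q, (1 / (r j : ℝ) - μ / ((r j : ℝ) + 1)) := by
  have hg : ∀ j, 1 ≤ j → j ≤ Q → 0 ≤ 1 / (r j : ℝ) - μ / ((r j : ℝ) + 1) := by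
    intro j h1 h2
    have hx : (1 : ℝ) ≤ (r j : ℝ) := by exact_mod_cast rpos r hr1 hrec j h1
    have hxν := hν j h1 h2
    have h1x : μ - 1 < 1 / (r j : ℝ) := hxν
    rw [sub_nonneg, div_le_div_iff₀ (by linarith) (by linarith)]
    have : (μ - 1) * (r j : ℝ) < (1 / (r j : ℝ)) * (r j : ℝ) :=
      mul_lt_mul_of_pos_right h1x (by linarith)
    rw [one_div_mul_cancel (by linarith)] at this
    nlinarith
  have hgsum : ∀ q, 1 ≤ q →
      0 ≤ ∑ j ∈ Icc q Q, (1 / (r j : ℝ) - μ / ((r j : ℝ) + 1)) := by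
    intro q hq
    apply Finset.sum_nonneg
    intro j hj
    rw [mem_Icc] at hj
    exact hg j (by omega) hj.2
  intro A
  induction A using Finset.strongInduction with
  | _ A ih =>
    intro q hq1 hq2 hP hcost
    have hrq1 : 1 ≤ r q := rpos r hr1 hrec q hq1
    have hrqR : (1 : ℝ) ≤ (r q : ℝ) := by exact_mod_cast hrq1
    have hagt : ∀ a ∈ A, r q < a := by
      intro a ha
      have h0 : (1 : ℝ) / a ≤ ∑ a ∈ A, (1 : ℝ) / a :=
        Finset.single_le_sum (f := fun a : ℕ => (1:ℝ)/a) (fun i _ => by positivity) ha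
      have h2 : 2 ≤ a := (hP a ha).1
      have haR : (0 : ℝ) < (a : ℝ) := by positivity
      have : (1 : ℝ) / a < 1 / (r q : ℝ) := lt_of_le_of_lt h0 hcost
      rw [div_lt_div_iff₀ haR (by linarith)] at this
      have : (r q : ℝ) < (a : ℝ) := by linarith
      exact_mod_cast this
    rcases Finset.eq_empty_or_nonempty A with rfl | ⟨a₀, ha₀⟩
    · simpa using hgsum q hq1
    · have hqQ : q ≤ Q := by
        by_contra h
        have hq' : q = Q + 1 := by omega
        subst hq'
        obtain ⟨h2, hk', hp'⟩ := hP a₀ ha₀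
        have := hL4 a₀ h2 hk' hp'
        have := hagt a₀ ha₀
        omega
      by_cases hmem : r q + 1 ∈ A
      · -- greedy item present: remove it and recurse at stage q+1
        have key : (r (q + 1) : ℝ) = (r q : ℝ) * ((r q : ℝ) + 1) := by
          rw [hrec q hq1]; push_cast; ring
        have hterm_cost : ((1 : ℝ) / ((r q + 1 : ℕ) : ℝ)) = 1 / ((r q : ℝ) + 1) := by
          push_cast; ring_nf
        have hsplitc : (∑ a ∈ A, (1 : ℝ) / a)
            = 1 / ((r q : ℝ) + 1) + ∑ a ∈ A.erase (r q + 1), (1 : ℝ) / a := by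
          rw [← Finset.add_sum_erase _ _ hmem, hterm_cost]
        have hcost' : (∑ a ∈ A.erase (r q + 1), (1 : ℝ) / a) < 1 / (r (q + 1) : ℝ) := by
          rw [key]
          have : 1 / (r q : ℝ) - 1 / ((r q : ℝ) + 1)
              = 1 / ((r q : ℝ) * ((r q : ℝ) + 1)) := by
            field_simp
            ring
          linarith [hsplitc ▸ hcost]
        have hrec' := ih (A.erase (r q + 1)) (Finset.erase_ssubset hmem) (q + 1)
          (by omega) (by omega)
          (fun a ha => hP a (Finset.mem_of_mem_erase ha)) hcost'
        rw [Finset.Icc_add_one_left_eq_Ioc] at hrec'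
        have hsplitg : (∑ a ∈ A, (1 / ((a : ℝ) - 1) - μ / a))
            = (1 / (r q : ℝ) - μ / ((r q : ℝ) + 1))
              + ∑ a ∈ A.erase (r q + 1), (1 / ((a : ℝ) - 1) - μ / a) := by
          rw [← Finset.add_sum_erase _ _ hmem]
          congr 1
          push_cast; ring_nf
        rw [Finset.Icc_eq_cons_Ioc hqQ, Finset.sum_cons, hsplitg]
        linarith
      · -- all items ≥ r q + 2 : ratio bound
        set c : ℝ := (r q : ℝ) with hc
        have hge : ∀ a ∈ A, c + 2 ≤ (a : ℝ) := by
          intro a ha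
          have h1 := hagt a ha
          have h2 : a ≠ r q + 1 := fun h => hmem (h ▸ ha)
          have : r q + 2 ≤ a := by omega
          rw [hc]; exact_mod_cast this
        set ρ : ℝ := (c + 2) / (c + 1) - μ with hρ
        have hterm : ∀ a ∈ A, 1 / ((a : ℝ) - 1) - μ / a ≤ ρ / a := by
          intro a ha
          have hA2 : c + 2 ≤ (a : ℝ) := hge a ha
          have ha1 : (0 : ℝ) < (a : ℝ) - 1 := by linarith
          have ha0 : (0 : ℝ) < (a : ℝ) := by linarith
          have hc1 : (0 : ℝ) < c + 1 := by linarith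
          have e1 : ρ / a + μ / (a : ℝ) = (c + 2) / ((c + 1) * (a : ℝ)) := by
            rw [hρ]; field_simp; ring
          have e2 : 1 / ((a : ℝ) - 1) ≤ (c + 2) / ((c + 1) * (a : ℝ)) := by
            rw [div_le_div_iff₀ ha1 (by positivity)]
            nlinarith
          linarith
        have hsum : (∑ a ∈ A, (1 / ((a : ℝ) - 1) - μ / a)) ≤ ρ * ∑ a ∈ A, (1 : ℝ) / a := by
          rw [Finset.mul_sum]
          apply Finset.sum_le_sum
          intro a ha
          rw [mul_one_div]
          exact hterm a ha
        have hcost0 : 0 ≤ ∑ a ∈ A, (1 : ℝ) / a :=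
          Finset.sum_nonneg (fun i _ => by positivity)
        rcases le_or_gt ρ 0 with hρ0 | hρ0
        · calc (∑ a ∈ A, (1 / ((a : ℝ) - 1) - μ / a)) ≤ ρ * ∑ a ∈ A, (1 : ℝ) / a := hsum
            _ ≤ 0 := mul_nonpos_of_nonpos_of_nonneg hρ0 hcost0
            _ ≤ _ := hgsum q hq1
        · have hcR : 0 < c := by linarith
          have step2 : ρ * (∑ a ∈ A, (1 : ℝ) / a) ≤ ρ * (1 / c) :=
            mul_le_mul_of_nonneg_left (le_of_lt hcost) (le_of_lt hρ0)
          have step3 : ρ * (1 / c) ≤ 1 / c - μ / (c + 1) := by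
            have hc1 : (0 : ℝ) < c + 1 := by linarith
            have e : (1 / c - μ / (c + 1)) - ρ * (1 / c) = (μ - 1) / (c * (c + 1)) := by
              rw [hρ]; field_simp; ring
            have : 0 ≤ (μ - 1) / (c * (c + 1)) := div_nonneg (by linarith) (by positivity)
            linarith
          have step4 : 1 / c - μ / (c + 1) ≤
              ∑ j ∈ Icc q Q, (1 / (r j : ℝ) - μ / ((r j : ℝ) + 1)) := by
            have hmemq : q ∈ Icc q Q := by rw [mem_Icc]; omega
            have := Finset.single_le_sum
              (f := fun j => 1 / (r j : ℝ) - μ / ((r j : ℝ) + 1))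
              (fun j hj => by rw [mem_Icc] at hj; exact hg j (by omega) hj.2) hmemq
            simpa [hc] using this
          linarith

end dprime

section umain
variable (k : ℕ) (μ : ℝ) (r : ℕ → ℕ) (Q : ℕ)

lemma Umain (hμ1 : 1 ≤ μ)
    (hr1 : r 1 = 1) (hrec : ∀ j ≥ 1, r (j + 1) = r j * (r j + 1)) (hQ1 : 1 ≤ Q)
    (hν : ∀ j, 1 ≤ j → j ≤ Q → μ - 1 < 1 / (r j : ℝ))
    (hL4 : ∀ a : ℕ, 2 ≤ a → a ≤ k → μ - 1 < 1 / ((a : ℝ) - 1) → a ≤ r (Q + 1)) :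
    ∀ n (S : Multiset ℕ), S.card = n → (∀ a ∈ S, 2 ≤ a ∧ a ≤ k) →
      (S.map (fun a : ℕ => (1 : ℝ) / (a : ℝ))).sum < 1 →
      (S.map (fun a : ℕ => 1 / ((a : ℝ) - 1) - μ / (a : ℝ))).sum ≤
        ∑ j ∈ Icc 1 Q, (1 / (r j : ℝ) - μ / ((r j : ℝ) + 1)) := by
  intro n
  induction n using Nat.strong_induction_on with
  | _ n ih =>
    intro S hcard hmem hcost
    classical
    by_cases hnd : S.Nodup
    · -- distinct : filter positive-gain items, use Dprime
      set p : ℕ → Prop := fun a => μ - 1 < 1 / ((a : ℝ) - 1) with hp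
      have hsplit := Multiset.filter_add_not p S
      have hgain : (S.map (fun a : ℕ => 1 / ((a : ℝ) - 1) - μ / (a : ℝ))).sum
          = ((S.filter p).map (fun a : ℕ => 1 / ((a : ℝ) - 1) - μ / (a : ℝ))).sum
            + ((S.filter (fun a => ¬ p a)).map
                (fun a : ℕ => 1 / ((a : ℝ) - 1) - μ / (a : ℝ))).sum := by
        conv_lhs => rw [← hsplit]
        rw [Multiset.map_add, Multiset.sum_add]
      have hneg : ((S.filter (fun a => ¬ p a)).map
          (fun a : ℕ => 1 / ((a : ℝ) - 1) - μ / (a : ℝ))).sum ≤ 0 := by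
        have := Multiset.sum_map_le_sum_map (s := S.filter (fun a => ¬ p a))
          (fun a : ℕ => 1 / ((a : ℝ) - 1) - μ / (a : ℝ)) (fun _ => (0 : ℝ)) ?_
        · simpa using this
        · intro a ha
          rw [Multiset.mem_filter] at ha
          obtain ⟨haS, hnp⟩ := ha
          have hnp' : 1 / ((a : ℝ) - 1) ≤ μ - 1 := not_lt.mp hnp
          have h2 : 2 ≤ a := (hmem a haS).1
          have h2R : (2 : ℝ) ≤ (a : ℝ) := by exact_mod_cast h2
          have ha1 : (0 : ℝ) < (a : ℝ) - 1 := by linarith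
          have ha0 : (0 : ℝ) < (a : ℝ) := by linarith
          rw [sub_nonpos, div_le_div_iff₀ ha1 ha0]
          have e : (1 / ((a : ℝ) - 1)) * ((a : ℝ) - 1) = 1 := by field_simp
          nlinarith [mul_le_mul_of_nonneg_right hnp' (le_of_lt ha1)]
      have hcostf : ((S.filter p).map (fun a : ℕ => (1 : ℝ) / (a : ℝ))).sum < 1 := by
        have hcsplit : (S.map (fun a : ℕ => (1 : ℝ) / (a : ℝ))).sum
            = ((S.filter p).map (fun a : ℕ => (1 : ℝ) / (a : ℝ))).sum
              + ((S.filter (fun a => ¬ p a)).map (fun a : ℕ => (1 : ℝ) / (a : ℝ))).sum := by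
          conv_lhs => rw [← hsplit]
          rw [Multiset.map_add, Multiset.sum_add]
        have hnn : 0 ≤ ((S.filter (fun a => ¬ p a)).map
            (fun a : ℕ => (1 : ℝ) / (a : ℝ))).sum := by
          apply Multiset.sum_nonneg
          intro x hx
          rw [Multiset.mem_map] at hx
          obtain ⟨a, _, rfl⟩ := hx
          positivity
        linarith [hcsplit ▸ hcost]
      set A : Finset ℕ := ⟨S.filter p, hnd.filter p⟩ with hA
      have hDP := Dprime k μ r Q hμ1 hr1 hrec hν hL4 A 1 le_rfl (by omega) ?_ ?_
      · rw [hgain]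
        have hAg : (∑ a ∈ A, (1 / ((a : ℝ) - 1) - μ / (a : ℝ)))
            = ((S.filter p).map (fun a : ℕ => 1 / ((a : ℝ) - 1) - μ / (a : ℝ))).sum :=
          Finset.sum_eq_multiset_sum _ _
        rw [hAg] at hDP
        linarith
      · intro a ha
        have ha' : a ∈ S.filter p := ha
        rw [Multiset.mem_filter] at ha'
        exact ⟨(hmem a ha'.1).1, (hmem a ha'.1).2, ha'.2⟩
      · have hAc : (∑ a ∈ A, (1 : ℝ) / (a : ℝ))
            = ((S.filter p).map (fun a : ℕ => (1 : ℝ) / (a : ℝ))).sum :=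
          Finset.sum_eq_multiset_sum _ _
        rw [hAc, hr1]
        simpa using hcostf
    · -- duplicates: merge two copies of a into one item
      have hdup : ∃ a, 2 ≤ S.count a := by
        by_contra h
        push_neg at h
        exact hnd (Multiset.nodup_iff_count_le_one.mpr (fun a => by
          have := h a; omega))
      obtain ⟨a, hca⟩ := hdup
      have haS : a ∈ S := by
        rw [← Multiset.count_pos]; omega
      obtain ⟨h2a, hak⟩ := hmem a haS
      have hrep : Multiset.replicate 2 a ≤ S := Multiset.le_count_iff_replicate_le.mp hca
      obtain ⟨T, hT⟩ := Multiset.le_iff_exists_add.mp hrep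
      have hTmem : ∀ b ∈ T, 2 ≤ b ∧ b ≤ k := by
        intro b hb
        exact hmem b (by rw [hT]; exact Multiset.mem_add.mpr (Or.inr hb))
      have hTcost0 : 0 ≤ (T.map (fun a : ℕ => (1 : ℝ) / (a : ℝ))).sum := by
        apply Multiset.sum_nonneg
        intro x hx
        rw [Multiset.mem_map] at hx
        obtain ⟨b, _, rfl⟩ := hx
        positivity
      have hcostS : (S.map (fun a : ℕ => (1 : ℝ) / (a : ℝ))).sum
          = 2 * ((1 : ℝ) / (a : ℝ)) + (T.map (fun a : ℕ => (1 : ℝ) / (a : ℝ))).sum := by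
        rw [hT, Multiset.map_add, Multiset.sum_add, Multiset.map_replicate,
          Multiset.sum_replicate]
        push_cast
        ring
      have hgainS : (S.map (fun a : ℕ => 1 / ((a : ℝ) - 1) - μ / (a : ℝ))).sum
          = 2 * (1 / ((a : ℝ) - 1) - μ / (a : ℝ))
            + (T.map (fun a : ℕ => 1 / ((a : ℝ) - 1) - μ / (a : ℝ))).sum := by
        rw [hT, Multiset.map_add, Multiset.sum_add, Multiset.map_replicate,
          Multiset.sum_replicate]
        push_cast
        ring
      by_cases ha2 : a = 2
      · exfalso
        subst ha2
        rw [hcostS] at hcost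
        have h1 : 2 * ((1 : ℝ) / ((2 : ℕ) : ℝ)) = 1 := by norm_num
        linarith
      · -- a ≥ 3 : merge
        have h3a : 3 ≤ a := by omega
        set c : ℕ := (a + 1) / 2 with hc
        have hc2 : 2 ≤ c := by omega
        have hck : c ≤ k := by omega
        have hcase : 2 * c = a ∨ 2 * c = a + 1 := by omega
        have hcR : (2 : ℝ) ≤ (c : ℝ) := by exact_mod_cast hc2
        have hc0 : (0 : ℝ) < (c : ℝ) := by linarith
        have hc1 : (0 : ℝ) < (c : ℝ) - 1 := by linarith
        have haR : (3 : ℝ) ≤ (a : ℝ) := by exact_mod_cast h3a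
        have ha0 : (0 : ℝ) < (a : ℝ) := by linarith
        have ha1 : (0 : ℝ) < (a : ℝ) - 1 := by linarith
        set S' : Multiset ℕ := c ::ₘ T with hS'
        have hcard' : S'.card < n := by
          have e1 : S.card = 2 + T.card := by
            rw [hT, Multiset.card_add, Multiset.card_replicate]
          have e2 : S'.card = T.card + 1 := by
            rw [hS', Multiset.card_cons]
          omega
        have hmem' : ∀ b ∈ S', 2 ≤ b ∧ b ≤ k := by
          intro b hb
          rw [hS', Multiset.mem_cons] at hb
          rcases hb with rfl | hb
          · exact ⟨hc2, hck⟩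
          · exact hTmem b hb
        have hcostle : (1 : ℝ) / (c : ℝ) ≤ 2 * (1 / (a : ℝ)) := by
          have haleR : (a : ℝ) ≤ 2 * (c : ℝ) := by
            rcases hcase with h | h
            · exact_mod_cast le_of_eq h.symm
            · have h' : (2 : ℝ) * (c : ℝ) = (a : ℝ) + 1 := by exact_mod_cast h
              linarith
          rw [mul_one_div, div_le_div_iff₀ hc0 ha0]
          linarith
        have hcost' : (S'.map (fun a : ℕ => (1 : ℝ) / (a : ℝ))).sum < 1 := by
          have e : (S'.map (fun a : ℕ => (1 : ℝ) / (a : ℝ))).sum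
              = (1 : ℝ) / (c : ℝ) + (T.map (fun a : ℕ => (1 : ℝ) / (a : ℝ))).sum := by
            rw [hS', Multiset.map_cons, Multiset.sum_cons]
          rw [e]
          rw [hcostS] at hcost
          linarith
        have hgainle : 2 * (1 / ((a : ℝ) - 1) - μ / (a : ℝ))
            ≤ 1 / ((c : ℝ) - 1) - μ / (c : ℝ) := by
          rcases hcase with h | h
          · have haeq : (a : ℝ) = 2 * (c : ℝ) := by exact_mod_cast h.symm
            rw [haeq]
            have key : 2 * (1 / (2 * (c : ℝ) - 1)) ≤ 1 / ((c : ℝ) - 1) := by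
              rw [mul_one_div, div_le_div_iff₀ (by linarith) hc1]
              linarith
            have e : 2 * (μ / (2 * (c : ℝ))) = μ / (c : ℝ) := by
              field_simp
            linarith [key]
          · have haeq : (a : ℝ) = 2 * (c : ℝ) - 1 := by
              have h' : (2 : ℝ) * (c : ℝ) = (a : ℝ) + 1 := by exact_mod_cast h
              linarith
            rw [haeq]
            have e1 : 2 * (1 / (2 * (c : ℝ) - 1 - 1)) = 1 / ((c : ℝ) - 1) := by
              rw [mul_one_div, div_eq_div_iff
                (ne_of_gt (by linarith : (0:ℝ) < 2 * (c : ℝ) - 1 - 1))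
                (ne_of_gt hc1)]
              ring
            have e2 : μ / (c : ℝ) ≤ 2 * (μ / (2 * (c : ℝ) - 1)) := by
              rw [show 2 * (μ / (2 * (c : ℝ) - 1)) = (2 * μ) / (2 * (c : ℝ) - 1) by
                rw [mul_div_assoc]]
              rw [div_le_div_iff₀ hc0 (by linarith)]
              nlinarith
            linarith
        have hrec' := ih S'.card (by omega) S' rfl hmem' hcost'
        have hgain' : (S'.map (fun a : ℕ => 1 / ((a : ℝ) - 1) - μ / (a : ℝ))).sum
            = (1 / ((c : ℝ) - 1) - μ / (c : ℝ))
              + (T.map (fun a : ℕ => 1 / ((a : ℝ) - 1) - μ / (a : ℝ))).sum := by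
          rw [hS', Multiset.map_cons, Multiset.sum_cons]
        rw [hgainS]
        rw [hgain'] at hrec'
        linarith

end umain

lemma rstrict (r : ℕ → ℕ) (hr1 : r 1 = 1) (hrec : ∀ j ≥ 1, r (j + 1) = r j * (r j + 1)) :
    ∀ i j, 1 ≤ i → i < j → r i < r j := by
  have hstep : ∀ t, 1 ≤ t → r t < r (t + 1) := by
    intro t ht
    have h1 := rpos r hr1 hrec t ht
    rw [hrec t ht]
    nlinarith
  intro i j hi hij
  have : ∀ d, r i < r (i + 1 + d) := by
    intro d
    induction d with
    | zero => exact hstep i hi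
    | succ d ihd =>
      have := hstep (i + 1 + d) (by omega)
      calc r i < r (i + 1 + d) := ihd
        _ < r (i + 1 + d + 1) := this
  have e : j = i + 1 + (j - i - 1) := by omega
  rw [e]
  exact this _

lemma msum (z : ℕ → ℕ) (f : ℕ → ℝ) (s : Finset ℕ) :
    ((∑ j ∈ s, Multiset.replicate (z j) (j + 1)).map f).sum
      = ∑ j ∈ s, (z j : ℝ) * f (j + 1) := by
  induction s using Finset.cons_induction with
  | empty => simp
  | cons a s ha ih =>
    rw [Finset.sum_cons, Finset.sum_cons, Multiset.map_add, Multiset.sum_add,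
      Multiset.map_replicate, Multiset.sum_replicate, ih, nsmul_eq_mul]

theorem IP_closed_form (k : ℕ) (μ : ℝ) (r : ℕ → ℕ) (Q : ℕ)
    (hk : 2 ≤ k) (hμ1 : 1 ≤ μ) (hμ2 : μ < 2)
    (hr1 : r 1 = 1) (hrec : ∀ j ≥ 1, r (j + 1) = r j * (r j + 1))
    (hQ : IsGreatest {j : ℕ | 1 ≤ j ∧
      r j ≤ ⌈1 / max (μ - 1) (1 / (k : ℝ))⌉₊ - 1} Q) :
    IPopt k μ = (∑ j ∈ Finset.Icc 1 (Q + 1), 1 / (r j : ℝ)) + (μ - 1) / (r (Q + 1) : ℝ) := by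
  classical
  obtain ⟨hQ1, hrQk, hν, hL4⟩ := keyfacts k μ r Q hk hμ1 hr1 hrec hQ
  set RHS : ℝ := (∑ j ∈ Finset.Icc 1 (Q + 1), 1 / (r j : ℝ)) + (μ - 1) / (r (Q + 1) : ℝ)
    with hRHS
  have hx1 : (1 : ℝ) ≤ (r (Q + 1) : ℝ) := by
    exact_mod_cast rpos r hr1 hrec (Q + 1) (by omega)
  have hx0 : (0 : ℝ) < (r (Q + 1) : ℝ) := by linarith
  have htel := rtel r hr1 hrec Q
  -- the key identity : μ + greedy gain sum = RHS
  have hkey : μ + ∑ j ∈ Icc 1 Q, (1 / (r j : ℝ) - μ / ((r j : ℝ) + 1)) = RHS := by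
    have e1 : ∑ j ∈ Icc 1 Q, (1 / (r j : ℝ) - μ / ((r j : ℝ) + 1))
        = ∑ j ∈ Icc 1 Q, 1 / (r j : ℝ) - ∑ j ∈ Icc 1 Q, μ / ((r j : ℝ) + 1) :=
      Finset.sum_sub_distrib _ _
    have e2 : ∑ j ∈ Icc 1 Q, μ / ((r j : ℝ) + 1)
        = μ * ∑ j ∈ Icc 1 Q, (1 : ℝ) / ((r j : ℝ) + 1) := by
      rw [Finset.mul_sum]
      exact Finset.sum_congr rfl (fun j _ => by rw [mul_one_div])
    have e3 : ∑ j ∈ Icc 1 Q, (1 : ℝ) / ((r j : ℝ) + 1) = 1 - 1 / (r (Q + 1) : ℝ) := htel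
    rw [hRHS, Finset.sum_Icc_succ_top (by omega : 1 ≤ Q + 1), e1, e2, e3]
    field_simp
    ring
  -- upper bound for every feasible z
  have hub : ∀ z : ℕ → ℕ, IPcost k z < 1 → IPscore k μ z ≤ RHS := by
    intro z hz
    set S : Multiset ℕ := ∑ j ∈ Finset.Icc 1 (k - 1), Multiset.replicate (z j) (j + 1)
      with hS
    have hcost_eq : (S.map (fun a : ℕ => (1 : ℝ) / (a : ℝ))).sum = IPcost k z := by
      rw [hS, msum, IPcost]
      exact Finset.sum_congr rfl (fun j _ => by push_cast; ring)
    have hgain_eq : (S.map (fun a : ℕ => 1 / ((a : ℝ) - 1) - μ / (a : ℝ))).sum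
        = ∑ j ∈ Finset.Icc 1 (k - 1), (z j : ℝ) * (1 / (j : ℝ) - μ / ((j : ℝ) + 1)) := by
      rw [hS, msum]
      exact Finset.sum_congr rfl (fun j _ => by push_cast; ring)
    have hmemS : ∀ a ∈ S, 2 ≤ a ∧ a ≤ k := by
      intro a ha
      rw [hS] at ha
      obtain ⟨j, hj, haj⟩ := Multiset.mem_sum.mp ha
      have := Multiset.eq_of_mem_replicate haj
      rw [Finset.mem_Icc] at hj
      omega
    have hcS : (S.map (fun a : ℕ => (1 : ℝ) / (a : ℝ))).sum < 1 := by
      rw [hcost_eq]; exact hz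
    have := Umain k μ r Q hμ1 hr1 hrec hQ1 hν hL4 S.card S rfl hmemS hcS
    rw [hgain_eq] at this
    rw [IPscore, ← hkey]
    linarith
  -- the greedy solution
  set zs : ℕ → ℕ := fun j => if j ∈ (Finset.Icc 1 Q).image r then 1 else 0 with hzs
  have hinj : ∀ x ∈ Finset.Icc 1 Q, ∀ y ∈ Finset.Icc 1 Q, r x = r y → x = y := by
    intro x hx y hy hxy
    rw [Finset.mem_Icc] at hx hy
    by_contra hne
    rcases Nat.lt_or_ge x y with h | h
    · have := rstrict r hr1 hrec x y (by omega) h; omega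
    · have hyx : y < x := by omega
      have := rstrict r hr1 hrec y x (by omega) hyx; omega
  have hsub : (Finset.Icc 1 Q).image r ⊆ Finset.Icc 1 (k - 1) := by
    intro x hx
    rw [Finset.mem_image] at hx
    obtain ⟨i, hi, rfl⟩ := hx
    rw [Finset.mem_Icc] at hi
    have h1 := rpos r hr1 hrec i hi.1
    have h2 := rmono r hr1 hrec i Q hi.1 hi.2
    rw [Finset.mem_Icc]
    omega
  have hgen : ∀ f : ℕ → ℝ,
      (∑ j ∈ Finset.Icc 1 (k - 1), (zs j : ℝ) * f j) = ∑ i ∈ Finset.Icc 1 Q, f (r i) := by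
    intro f
    have e1 : ∀ j ∈ Finset.Icc 1 (k - 1), (zs j : ℝ) * f j
        = if j ∈ (Finset.Icc 1 Q).image r then f j else 0 := by
      intro j _
      rw [hzs]
      by_cases h : j ∈ (Finset.Icc 1 Q).image r <;> simp [h]
    rw [Finset.sum_congr rfl e1, Finset.sum_ite_mem,
      Finset.inter_eq_right.mpr hsub, Finset.sum_image hinj]
  have hcosts : IPcost k zs = 1 - 1 / (r (Q + 1) : ℝ) := by
    rw [IPcost, ← htel]
    have := hgen (fun j => 1 / ((j : ℝ) + 1))
    calc ∑ j ∈ Finset.Icc 1 (k - 1), (zs j : ℝ) / ((j : ℝ) + 1)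
        = ∑ j ∈ Finset.Icc 1 (k - 1), (zs j : ℝ) * (1 / ((j : ℝ) + 1)) := by
          exact Finset.sum_congr rfl (fun j _ => by ring)
      _ = ∑ i ∈ Finset.Icc 1 Q, 1 / ((r i : ℝ) + 1) := this
      _ = ∑ i ∈ Finset.Icc 1 Q, (1 : ℝ) / ((r i : ℝ) + 1) := rfl
  have hcosts1 : IPcost k zs < 1 := by
    rw [hcosts]
    have : 0 < 1 / (r (Q + 1) : ℝ) := by positivity
    linarith
  have hscores : IPscore k μ zs = RHS := by
    rw [IPscore, ← hkey]
    congr 1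
    have := hgen (fun j => 1 / (j : ℝ) - μ / ((j : ℝ) + 1))
    rw [this]
  -- conclude
  have hmemset : RHS ∈ {s | ∃ z : ℕ → ℕ, IPcost k z < 1 ∧ s = IPscore k μ z} :=
    ⟨zs, hcosts1, hscores.symm⟩
  have hbdd : ∀ s ∈ {s | ∃ z : ℕ → ℕ, IPcost k z < 1 ∧ s = IPscore k μ z}, s ≤ RHS := by
    rintro s ⟨z, hz, rfl⟩
    exact hub z hz
  rw [IPopt]
  exact le_antisymm (csSup_le ⟨RHS, hmemset⟩ hbdd) (le_csSup ⟨RHS, hbdd⟩ hmemset)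
end

section
/- With μ_k = k/(k−1) and T_k = opt(IP(k, μ_k)), the limit T_∞ = lim_{k→∞} T_k exists and equals S_∞ = ∑_{j=1}^∞ 1/r_j, and S_{10} ≤ T_∞ ≤ S_{10} + 1/(r_{10}(r_9 + 1)); in particular T_∞ ≈ 1.6910302 satisfies 1.69103 < T_∞ < 1.69104. -/
namespace TInf

variable (r : ℕ → ℕ)

/-- partial sums S_t -/
noncomputable def Ssum (t : ℕ) : ℝ := ∑ j ∈ Finset.Icc 1 t, 1 / (r j : ℝ)

lemma r_pos (hr1 : r 1 = 1) (hrec : ∀ j ≥ 1, r (j + 1) = r j * (r j + 1)) :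
    ∀ m, 1 ≤ m → 1 ≤ r m := by
  intro m hm
  induction m, hm using Nat.le_induction with
  | base => omega
  | succ n hn ih => rw [hrec n hn]; nlinarith

lemma r_lt (hr1 : r 1 = 1) (hrec : ∀ j ≥ 1, r (j + 1) = r j * (r j + 1)) :
    ∀ i, 1 ≤ i → ∀ j, i < j → r i < r j := by
  intro i hi j hj
  induction j, hj using Nat.le_induction with
  | base =>
      rw [hrec i hi]
      have := r_pos r hr1 hrec i hi
      nlinarith
  | succ n hn ih =>
      have h1n : 1 ≤ n := le_trans hi (by omega)
      rw [hrec n h1n]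
      have := r_pos r hr1 hrec n h1n
      nlinarith

lemma r_mono (hr1 : r 1 = 1) (hrec : ∀ j ≥ 1, r (j + 1) = r j * (r j + 1)) :
    ∀ i, 1 ≤ i → ∀ j, i ≤ j → r i ≤ r j := by
  intro i hi j hj
  rcases eq_or_lt_of_le hj with h | h
  · rw [h]
  · exact (r_lt r hr1 hrec i hi j h).le

lemma Ssum_succ (t : ℕ) : Ssum r (t + 1) = Ssum r t + 1 / (r (t + 1) : ℝ) := by
  unfold Ssum
  rw [Finset.sum_Icc_succ_top (by omega : 1 ≤ t + 1)]

lemma Ssum_mono : Monotone (Ssum r) := by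
  intro a b hab
  unfold Ssum
  apply Finset.sum_le_sum_of_subset_of_nonneg
  · exact Finset.Icc_subset_Icc_right hab
  · intro j _ _; positivity

lemma Ssum_tail (hr1 : r 1 = 1) (hrec : ∀ j ≥ 1, r (j + 1) = r j * (r j + 1)) :
    ∀ m, 1 ≤ m → ∀ t, Ssum r t ≤ Ssum r m + 2 / (r (m + 1) : ℝ) := by
  intro m hm t
  rcases le_total t m with h | h
  · have h1 := Ssum_mono r h
    have h2 : (0:ℝ) ≤ 2 / (r (m+1) : ℝ) := by positivity
    linarith
  · -- induction from m up to t : D t := Ssum t + 2 / r (t+1) is non-increasing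
    have hD : ∀ u, m ≤ u → Ssum r u + 2 / (r (u+1) : ℝ) ≤ Ssum r m + 2 / (r (m+1) : ℝ) := by
      intro u hu
      induction u, hu using Nat.le_induction with
      | base => exact le_refl _
      | succ n hn ih =>
          have h1n : 1 ≤ n + 1 := by omega
          have hrn1 : 1 ≤ r (n + 1) := r_pos r hr1 hrec (n+1) h1n
          have hrn2 : r (n + 2) = r (n+1) * (r (n+1) + 1) := hrec (n+1) h1n
          have hc1 : (1:ℝ) ≤ (r (n+1) : ℝ) := by exact_mod_cast hrn1
          have hc2 : (r (n+2) : ℝ) = (r (n+1) : ℝ) * ((r (n+1) : ℝ) + 1) := by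
            rw [hrn2]; push_cast; ring
          have hstep : Ssum r (n+1) + 2 / (r (n+2) : ℝ) ≤ Ssum r n + 2 / (r (n+1) : ℝ) := by
            rw [Ssum_succ]
            have hpos1 : (0:ℝ) < (r (n+1) : ℝ) := by linarith
            have hpos2 : (0:ℝ) < (r (n+2) : ℝ) := by rw [hc2]; positivity
            rw [hc2]
            have hle : 2 / ((r (n+1):ℝ) * ((r (n+1):ℝ)+1)) ≤ 1 / (r (n+1):ℝ) := by
              rw [div_le_div_iff₀ (by positivity) hpos1]; nlinarith
            have h2c : (2:ℝ)/(r (n+1):ℝ) = 2*(1/(r (n+1):ℝ)) := by ring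
            linarith
          linarith
    have hend := hD t h
    have : (0:ℝ) ≤ 2 / (r (t+1) : ℝ) := by positivity
    linarith


lemma Ssum_bdd (hr1 : r 1 = 1) (hrec : ∀ j ≥ 1, r (j + 1) = r j * (r j + 1)) :
    BddAbove (Set.range (Ssum r)) := by
  refine ⟨Ssum r 1 + 2 / (r 2 : ℝ), ?_⟩
  rintro x ⟨t, rfl⟩
  exact Ssum_tail r hr1 hrec 1 le_rfl t

lemma Ssum_le_L (hr1 : r 1 = 1) (hrec : ∀ j ≥ 1, r (j + 1) = r j * (r j + 1)) (t : ℕ) :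
    Ssum r t ≤ ⨆ u, Ssum r u :=
  le_ciSup (Ssum_bdd r hr1 hrec) t

/-- the key greedy upper bound for the integer program -/
lemma key (hr1 : r 1 = 1) (hrec : ∀ j ≥ 1, r (j + 1) = r j * (r j + 1)) :
    ∀ n m, 1 ≤ m → ∀ s : Finset ℕ, ∀ z : ℕ → ℕ,
      (∀ j ∈ s, z j ≠ 0 → r m ≤ j) → (∑ j ∈ s, z j ≤ n) →
      (∑ j ∈ s, (z j : ℝ) / ((j : ℝ) + 1)) < 1 / (r m : ℝ) →
      (∑ j ∈ s, (z j : ℝ) / ((j : ℝ) * ((j : ℝ) + 1))) ≤ (⨆ u, Ssum r u) - Ssum r m := by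
  intro n
  induction n with
  | zero =>
      intro m hm s z hsupp hcard hcost
      have hz : ∀ j ∈ s, z j = 0 := by
        intro j hj
        exact (Finset.sum_eq_zero_iff).mp (Nat.le_zero.mp hcard) j hj
      rw [Finset.sum_eq_zero (fun j hj => by rw [hz j hj]; simp)]
      have := Ssum_le_L r hr1 hrec m
      linarith
  | succ n ih =>
      intro m hm s z hsupp hcard hcost
      have hRn : 1 ≤ r m := r_pos r hr1 hrec m hm
      have hR : (1:ℝ) ≤ (r m : ℝ) := by exact_mod_cast hRn
      have hRpos : (0:ℝ) < (r m : ℝ) := by linarith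
      have hrm1 : r (m+1) = r m * (r m + 1) := hrec m hm
      have hrm1c : (r (m+1) : ℝ) = (r m : ℝ) * ((r m : ℝ) + 1) := by
        rw [hrm1]; push_cast; ring
      have hrm1pos : (0:ℝ) < (r (m+1) : ℝ) := by rw [hrm1c]; positivity
      have hSm1 : Ssum r (m+1) = Ssum r m + 1 / (r (m+1) : ℝ) := Ssum_succ r m
      have hLm1 : Ssum r (m+1) ≤ ⨆ u, Ssum r u := Ssum_le_L r hr1 hrec (m+1)
      by_cases hgr : r m ∈ s ∧ z (r m) ≠ 0
      · obtain ⟨hmem, hzne⟩ := hgr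
        -- z (r m) = 1
        have hsingle : (z (r m) : ℝ) / ((r m : ℝ) + 1) ≤ ∑ j ∈ s, (z j : ℝ) / ((j : ℝ) + 1) := by
          apply Finset.single_le_sum (f := fun j => (z j : ℝ) / ((j : ℝ) + 1)) _ hmem
          intro i _; positivity
        have hz2 : (z (r m) : ℝ) < 2 := by
          have h1 : (z (r m) : ℝ) / ((r m : ℝ) + 1) < 1 / (r m : ℝ) := lt_of_le_of_lt hsingle hcost
          rw [div_lt_div_iff₀ (by linarith) hRpos] at h1
          nlinarith
        have hz1 : z (r m) = 1 := by
          have : z (r m) < 2 := by exact_mod_cast hz2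
          omega
        set s' := s.erase (r m) with hs'
        have hsum_erase : ∀ f : ℕ → ℝ, ∑ j ∈ s', f j + f (r m) = ∑ j ∈ s, f j :=
          fun f => Finset.sum_erase_add s f hmem
        have hcard' : ∑ j ∈ s', z j ≤ n := by
          have he : ∑ j ∈ s', z j + z (r m) = ∑ j ∈ s, z j := Finset.sum_erase_add s z hmem
          rw [hz1] at he
          omega
        have hcost' : ∑ j ∈ s', (z j : ℝ) / ((j : ℝ) + 1) < 1 / (r (m+1) : ℝ) := by
          have he := hsum_erase (fun j => (z j : ℝ) / ((j : ℝ) + 1))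
          simp only [hz1] at he
          have hgap : 1 / (r m : ℝ) - 1 / ((r m : ℝ) + 1) = 1 / (r (m+1) : ℝ) := by
            rw [hrm1c]; field_simp; ring
          push_cast at he
          linarith
        have hsupp' : ∀ j ∈ s', z j ≠ 0 → r (m+1) ≤ j := by
          intro j hj hzj
          have hj1 : (1:ℝ) ≤ (z j : ℝ) := by
            have : 1 ≤ z j := Nat.one_le_iff_ne_zero.mpr hzj
            exact_mod_cast this
          have hterm : (1:ℝ) / ((j:ℝ)+1) ≤ ∑ i ∈ s', (z i : ℝ) / ((i : ℝ) + 1) := by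
            have h1 : (1:ℝ) / ((j:ℝ)+1) ≤ (z j : ℝ) / ((j:ℝ)+1) := by gcongr
            have h2 : (z j : ℝ) / ((j:ℝ)+1) ≤ ∑ i ∈ s', (z i : ℝ) / ((i : ℝ) + 1) :=
              Finset.single_le_sum (f := fun i => (z i : ℝ) / ((i : ℝ) + 1))
                (fun i _ => by positivity) hj
            linarith
          have hlt : (1:ℝ) / ((j:ℝ)+1) < 1 / (r (m+1) : ℝ) := lt_of_le_of_lt hterm hcost'
          rw [div_lt_div_iff₀ (by positivity) hrm1pos] at hlt
          have : (r (m+1) : ℝ) < (j : ℝ) + 1 := by linarith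
          have : r (m+1) < j + 1 := by exact_mod_cast this
          omega
        have hIH := ih (m+1) (by omega) s' z hsupp' hcard' hcost'
        have heq2 := hsum_erase (fun j => (z j : ℝ) / ((j : ℝ) * ((j : ℝ) + 1)))
        simp only [hz1] at heq2
        push_cast at heq2
        have hterm_val : (1:ℝ) / ((r m : ℝ) * ((r m : ℝ) + 1)) = 1 / (r (m+1) : ℝ) := by
          rw [hrm1c]
        linarith
      · -- all support is ≥ r m + 1
        have hsupp2 : ∀ j ∈ s, z j ≠ 0 → r m + 1 ≤ j := by
          intro j hj hzj
          have h1 := hsupp j hj hzj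
          rcases eq_or_lt_of_le h1 with h | h
          · exfalso; apply hgr; constructor
            · rwa [h]
            · rwa [h]
          · omega
        have hstep : ∑ j ∈ s, (z j : ℝ) / ((j : ℝ) * ((j : ℝ) + 1))
            ≤ ∑ j ∈ s, (1 / ((r m : ℝ) + 1)) * ((z j : ℝ) / ((j : ℝ) + 1)) := by
          apply Finset.sum_le_sum
          intro j hj
          by_cases hzj : z j = 0
          · simp [hzj]
          · have hjge : r m + 1 ≤ j := hsupp2 j hj hzj
            have hjc : (r m : ℝ) + 1 ≤ (j : ℝ) := by exact_mod_cast hjge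
            have hj0 : (0:ℝ) < (j:ℝ) := by linarith
            have heq : (z j:ℝ)/((j:ℝ)*((j:ℝ)+1)) = (1/(j:ℝ)) * ((z j:ℝ)/((j:ℝ)+1)) := by
              field_simp
            rw [heq]
            apply mul_le_mul_of_nonneg_right _ (by positivity)
            exact one_div_le_one_div_of_le (by positivity) hjc
        have hsum_fac : ∑ j ∈ s, (1 / ((r m : ℝ) + 1)) * ((z j : ℝ) / ((j : ℝ) + 1))
            = (1 / ((r m : ℝ) + 1)) * ∑ j ∈ s, (z j : ℝ) / ((j : ℝ) + 1) := by
          rw [Finset.mul_sum]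
        have hfinal : (1 / ((r m : ℝ) + 1)) * ∑ j ∈ s, (z j : ℝ) / ((j : ℝ) + 1)
            ≤ 1 / (r (m+1) : ℝ) := by
          have hnn : (0:ℝ) ≤ 1 / ((r m : ℝ) + 1) := by positivity
          have h2 : (1 / ((r m : ℝ) + 1)) * ∑ j ∈ s, (z j : ℝ) / ((j : ℝ) + 1)
              ≤ (1 / ((r m : ℝ) + 1)) * (1 / (r m : ℝ)) := by
            apply mul_le_mul_of_nonneg_left hcost.le hnn
          have h3 : (1 / ((r m : ℝ) + 1)) * (1 / (r m : ℝ)) = 1 / (r (m+1) : ℝ) := by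
            rw [hrm1c]; field_simp
          linarith
        linarith


lemma Ssum_one (hr1 : r 1 = 1) : Ssum r 1 = 1 := by
  simp [Ssum, hr1]

lemma IP_mem_le (hr1 : r 1 = 1) (hrec : ∀ j ≥ 1, r (j + 1) = r j * (r j + 1))
    (k : ℕ) (hk : 2 ≤ k) (x : ℝ)
    (hx : x ∈ {s | ∃ z : ℕ → ℕ, IPcost k z < 1 ∧ s = IPscore k ((k:ℝ)/((k:ℝ)-1)) z}) :
    x ≤ (k:ℝ)/((k:ℝ)-1) + ((⨆ u, Ssum r u) - 1) := by
  obtain ⟨z, hcost, rfl⟩ := hx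
  have hk2 : (2:ℝ) ≤ (k:ℝ) := by exact_mod_cast hk
  have hkm1 : (0:ℝ) < (k:ℝ) - 1 := by linarith
  set μ := (k:ℝ)/((k:ℝ)-1) with hμ
  have hμ1 : 1 ≤ μ := by
    rw [hμ, le_div_iff₀ hkm1]; linarith
  have h1 : ∑ j ∈ Finset.Icc 1 (k-1), (z j : ℝ) * (1 / (j : ℝ) - μ / ((j : ℝ) + 1))
      ≤ ∑ j ∈ Finset.Icc 1 (k-1), (z j : ℝ) / ((j : ℝ) * ((j : ℝ) + 1)) := by
    apply Finset.sum_le_sum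
    intro j hj
    have hj1 : 1 ≤ j := (Finset.mem_Icc.mp hj).1
    have hjc : (1:ℝ) ≤ (j:ℝ) := by exact_mod_cast hj1
    have hj0 : (j:ℝ) ≠ 0 := by linarith
    have hident : 1/(j:ℝ) - 1/((j:ℝ)+1) = 1/((j:ℝ)*((j:ℝ)+1)) := by
      field_simp
      ring
    have hμj : 1/((j:ℝ)+1) ≤ μ/((j:ℝ)+1) := by gcongr
    have hterm : 1/(j:ℝ) - μ/((j:ℝ)+1) ≤ 1/((j:ℝ)*((j:ℝ)+1)) := by linarith
    calc (z j : ℝ) * (1 / (j : ℝ) - μ / ((j : ℝ) + 1))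
        ≤ (z j : ℝ) * (1/((j:ℝ)*((j:ℝ)+1))) := by
          apply mul_le_mul_of_nonneg_left hterm (by positivity)
      _ = (z j : ℝ) / ((j : ℝ) * ((j : ℝ) + 1)) := by rw [mul_one_div]
  have hcost' : ∑ j ∈ Finset.Icc 1 (k-1), (z j : ℝ) / ((j : ℝ) + 1) < 1/(r 1 : ℝ) := by
    rw [hr1]
    norm_num
    exact hcost
  have h2 := key r hr1 hrec (∑ j ∈ Finset.Icc 1 (k-1), z j) 1 le_rfl
      (Finset.Icc 1 (k-1)) z
      (fun j hj _ => by rw [hr1]; exact (Finset.mem_Icc.mp hj).1)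
      le_rfl hcost'
  rw [Ssum_one r hr1] at h2
  simp only [IPscore]
  linarith

lemma IP_nonempty (k : ℕ) (μ : ℝ) :
    μ ∈ {s | ∃ z : ℕ → ℕ, IPcost k z < 1 ∧ s = IPscore k μ z} := by
  refine ⟨fun _ => 0, ?_, ?_⟩
  · simp [IPcost]
  · simp [IPscore]

lemma IP_bdd (hr1 : r 1 = 1) (hrec : ∀ j ≥ 1, r (j + 1) = r j * (r j + 1))
    (k : ℕ) (hk : 2 ≤ k) :
    BddAbove {s | ∃ z : ℕ → ℕ, IPcost k z < 1 ∧ s = IPscore k ((k:ℝ)/((k:ℝ)-1)) z} :=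
  ⟨(k:ℝ)/((k:ℝ)-1) + ((⨆ u, Ssum r u) - 1),
    fun x hx => IP_mem_le r hr1 hrec k hk x hx⟩

lemma T_ub (hr1 : r 1 = 1) (hrec : ∀ j ≥ 1, r (j + 1) = r j * (r j + 1))
    (k : ℕ) (hk : 2 ≤ k) :
    IPopt k ((k:ℝ)/((k:ℝ)-1)) ≤ (⨆ u, Ssum r u) + 1/((k:ℝ)-1) := by
  have hk2 : (2:ℝ) ≤ (k:ℝ) := by exact_mod_cast hk
  have hkm1 : (0:ℝ) < (k:ℝ) - 1 := by linarith
  have hμeq : (k:ℝ)/((k:ℝ)-1) = 1 + 1/((k:ℝ)-1) := by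
    field_simp
    ring
  have := csSup_le ⟨_, IP_nonempty k ((k:ℝ)/((k:ℝ)-1))⟩
    (fun x hx => IP_mem_le r hr1 hrec k hk x hx)
  unfold IPopt
  linarith [this]

lemma telescope (hr1 : r 1 = 1) (hrec : ∀ j ≥ 1, r (j + 1) = r j * (r j + 1)) :
    ∀ u, 1 ≤ u → ∑ i ∈ Finset.Icc 1 u, 1/((r i : ℝ)+1) = 1 - 1/(r (u+1) : ℝ) := by
  intro u hu
  induction u, hu using Nat.le_induction with
  | base =>
      have h2 : r 2 = 2 := by rw [show (2:ℕ) = 1 + 1 from rfl, hrec 1 le_rfl, hr1]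
      simp [hr1, h2]
      norm_num
  | succ n hn ih =>
      rw [Finset.sum_Icc_succ_top (by omega : 1 ≤ n + 1), ih]
      have h1n : 1 ≤ n + 1 := by omega
      have hrn1 : 1 ≤ r (n + 1) := r_pos r hr1 hrec (n+1) h1n
      have hc1 : (1:ℝ) ≤ (r (n+1) : ℝ) := by exact_mod_cast hrn1
      have hc2 : (r (n+2) : ℝ) = (r (n+1) : ℝ) * ((r (n+1) : ℝ) + 1) := by
        rw [hrec (n+1) h1n]; push_cast; ring
      rw [hc2]
      have hpos : (0:ℝ) < (r (n+1) : ℝ) := by linarith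
      field_simp
      ring

lemma T_lb (hr1 : r 1 = 1) (hrec : ∀ j ≥ 1, r (j + 1) = r j * (r j + 1))
    (t : ℕ) (ht : 1 ≤ t) (k : ℕ) (hk : r t + 1 ≤ k) :
    Ssum r t ≤ IPopt k ((k:ℝ)/((k:ℝ)-1)) := by
  have hrt1 : 1 ≤ r t := r_pos r hr1 hrec t ht
  have hk2 : 2 ≤ k := by omega
  have hk2' : (2:ℝ) ≤ (k:ℝ) := by exact_mod_cast hk2
  have hkm1 : (0:ℝ) < (k:ℝ) - 1 := by linarith
  set μ := (k:ℝ)/((k:ℝ)-1) with hμ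
  have hμpos : 0 < μ := by rw [hμ]; positivity
  set F := (Finset.Icc 1 t).image r with hF
  set z : ℕ → ℕ := fun j => if j ∈ F then 1 else 0 with hz
  have hFsub : F ⊆ Finset.Icc 1 (k-1) := by
    intro j hj
    rw [hF] at hj
    obtain ⟨i, hi, rfl⟩ := Finset.mem_image.mp hj
    obtain ⟨hi1, hit⟩ := Finset.mem_Icc.mp hi
    have h1 : 1 ≤ r i := r_pos r hr1 hrec i hi1
    have h2 : r i ≤ r t := r_mono r hr1 hrec i hi1 t hit
    rw [Finset.mem_Icc]
    omega
  have hinj : ∀ i ∈ Finset.Icc 1 t, ∀ i' ∈ Finset.Icc 1 t, r i = r i' → i = i' := by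
    intro i hi i' hi' hrr
    obtain ⟨hi1, _⟩ := Finset.mem_Icc.mp hi
    obtain ⟨hi'1, _⟩ := Finset.mem_Icc.mp hi'
    by_contra hne
    rcases Nat.lt_or_ge i i' with h | h
    · exact absurd hrr (Nat.ne_of_lt (r_lt r hr1 hrec i hi1 i' h))
    · have h' : i' < i := by omega
      exact absurd hrr.symm (Nat.ne_of_lt (r_lt r hr1 hrec i' hi'1 i h'))
  have hgen : ∀ w : ℕ → ℝ, ∑ j ∈ Finset.Icc 1 (k-1), (z j : ℝ) * w j
      = ∑ i ∈ Finset.Icc 1 t, w (r i) := by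
    intro w
    have step1 : ∀ j, (z j : ℝ) * w j = if j ∈ F then w j else 0 := by
      intro j
      by_cases h : j ∈ F <;> simp [hz, h]
    calc ∑ j ∈ Finset.Icc 1 (k-1), (z j : ℝ) * w j
        = ∑ j ∈ Finset.Icc 1 (k-1), (if j ∈ F then w j else 0) :=
          Finset.sum_congr rfl (fun j _ => step1 j)
      _ = ∑ j ∈ Finset.Icc 1 (k-1) ∩ F, w j := Finset.sum_ite_mem _ _ _
      _ = ∑ j ∈ F, w j := by rw [Finset.inter_eq_right.mpr hFsub]
      _ = ∑ i ∈ Finset.Icc 1 t, w (r i) := Finset.sum_image hinj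
  have hrt1pos : (0:ℝ) < (r (t+1) : ℝ) := by
    have : 1 ≤ r (t+1) := r_pos r hr1 hrec (t+1) (by omega)
    have : (1:ℝ) ≤ (r (t+1) : ℝ) := by exact_mod_cast this
    linarith
  have hcost : IPcost k z = 1 - 1/(r (t+1) : ℝ) := by
    unfold IPcost
    have : ∀ j ∈ Finset.Icc 1 (k-1), (z j : ℝ) / ((j:ℝ)+1) = (z j : ℝ) * (1/((j:ℝ)+1)) := by
      intro j _; rw [mul_one_div]
    rw [Finset.sum_congr rfl this, hgen (fun j => 1/((j:ℝ)+1))]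
    exact telescope r hr1 hrec t ht
  have hcostlt : IPcost k z < 1 := by
    rw [hcost]
    have : (0:ℝ) < 1/(r (t+1) : ℝ) := by positivity
    linarith
  have hscore : IPscore k μ z = μ + (Ssum r t - μ * (1 - 1/(r (t+1) : ℝ))) := by
    unfold IPscore
    rw [hgen (fun j => 1 / (j : ℝ) - μ / ((j : ℝ) + 1))]
    have hsplit : ∑ i ∈ Finset.Icc 1 t, (1 / (r i : ℝ) - μ / ((r i : ℝ) + 1))
        = (∑ i ∈ Finset.Icc 1 t, 1 / (r i : ℝ)) - μ * ∑ i ∈ Finset.Icc 1 t, 1/((r i : ℝ)+1) := by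
      rw [Finset.sum_sub_distrib, Finset.mul_sum]
      congr 1
      apply Finset.sum_congr rfl
      intro i _
      rw [mul_one_div]
    rw [hsplit, telescope r hr1 hrec t ht]
    rfl
  have hmem : IPscore k μ z ∈ {s | ∃ z' : ℕ → ℕ, IPcost k z' < 1 ∧ s = IPscore k μ z'} :=
    ⟨z, hcostlt, rfl⟩
  have hle : IPscore k μ z ≤ IPopt k μ := le_csSup (IP_bdd r hr1 hrec k hk2) hmem
  have hprod : 0 ≤ μ * (1/(r (t+1) : ℝ)) := by positivity
  have hexp : μ * (1 - 1/(r (t+1) : ℝ)) = μ - μ * (1/(r (t+1) : ℝ)) := by ring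
  rw [hscore] at hle
  linarith


end TInf

open TInf

theorem T_infinity (r : ℕ → ℕ)
    (hr1 : r 1 = 1) (hrec : ∀ j ≥ 1, r (j + 1) = r j * (r j + 1)) :
    ∃ L : ℝ,
      Filter.Tendsto (fun k : ℕ => IPopt k ((k : ℝ) / ((k : ℝ) - 1)))
        Filter.atTop (nhds L) ∧
      Filter.Tendsto (fun t : ℕ => ∑ j ∈ Finset.Icc 1 t, 1 / (r j : ℝ))
        Filter.atTop (nhds L) ∧
      (∑ j ∈ Finset.Icc 1 10, 1 / (r j : ℝ)) ≤ L ∧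
      L ≤ (∑ j ∈ Finset.Icc 1 10, 1 / (r j : ℝ)) + 1 / ((r 10 : ℝ) * ((r 9 : ℝ) + 1)) ∧
      1.69103 < L ∧ L < 1.69104 := by
  -- numeric values of r
  have h2 : r 2 = 2 := by rw [show (2:ℕ) = 1 + 1 from rfl, hrec 1 le_rfl, hr1]
  have h3 : r 3 = 6 := by rw [show (3:ℕ) = 2 + 1 from rfl, hrec 2 (by omega), h2]
  have h4 : r 4 = 42 := by rw [show (4:ℕ) = 3 + 1 from rfl, hrec 3 (by omega), h3]
  have h5 : r 5 = 1806 := by rw [show (5:ℕ) = 4 + 1 from rfl, hrec 4 (by omega), h4]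
  have h6 : r 6 = 3263442 := by rw [show (6:ℕ) = 5 + 1 from rfl, hrec 5 (by omega), h5]
  have h7 : r 7 = 3263442 * 3263443 := by
    rw [show (7:ℕ) = 6 + 1 from rfl, hrec 6 (by omega), h6]
  have e1 : Ssum r 1 = 1 := Ssum_one r hr1
  have e2 : Ssum r 2 = Ssum r 1 + 1/(r 2 : ℝ) := Ssum_succ r 1
  have e3 : Ssum r 3 = Ssum r 2 + 1/(r 3 : ℝ) := Ssum_succ r 2
  have e4 : Ssum r 4 = Ssum r 3 + 1/(r 4 : ℝ) := Ssum_succ r 3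
  have e5 : Ssum r 5 = Ssum r 4 + 1/(r 5 : ℝ) := Ssum_succ r 4
  have e6 : Ssum r 6 = Ssum r 5 + 1/(r 6 : ℝ) := Ssum_succ r 5
  have hS6 : Ssum r 6 = 1 + 1/2 + 1/6 + 1/42 + 1/1806 + 1/3263442 := by
    rw [e6, e5, e4, e3, e2, e1, h2, h3, h4, h5, h6]
    norm_num
  set L : ℝ := ⨆ u, Ssum r u with hL
  have hStoL : ∀ t, Ssum r t ≤ L := fun t => Ssum_le_L r hr1 hrec t
  have hLtail : ∀ m, 1 ≤ m → L ≤ Ssum r m + 2 / (r (m+1) : ℝ) := by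
    intro m hm
    apply ciSup_le
    intro t
    exact Ssum_tail r hr1 hrec m hm t
  refine ⟨L, ?_, ?_, ?_, ?_, ?_, ?_⟩
  · -- main tendsto
    rw [Metric.tendsto_atTop]
    intro ε hε
    have hlt : L - ε/2 < ⨆ u, Ssum r u := by rw [← hL]; linarith
    obtain ⟨t0, ht0⟩ := exists_lt_of_lt_ciSup hlt
    set t := max t0 1 with htdef
    have ht1 : 1 ≤ t := le_max_right _ _
    have hSt : L - ε/2 < Ssum r t := lt_of_lt_of_le ht0 (Ssum_mono r (le_max_left _ _))
    obtain ⟨M, hM⟩ := exists_nat_gt (2/ε)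
    refine ⟨max (r t + 1) (M + 1), fun k hk => ?_⟩
    have hk1 : r t + 1 ≤ k := le_trans (le_max_left _ _) hk
    have hk2 : M + 1 ≤ k := le_trans (le_max_right _ _) hk
    have hrt1 : 1 ≤ r t := r_pos r hr1 hrec t ht1
    have hkk : 2 ≤ k := by omega
    have hub := T_ub r hr1 hrec k hkk
    have hlb := T_lb r hr1 hrec t ht1 k hk1
    have hkc : (M:ℝ) + 1 ≤ (k:ℝ) := by exact_mod_cast hk2
    have h2e : 2/ε < (M:ℝ) := hM
    have hMpos : (0:ℝ) < 2/ε := by positivity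
    have hkm1pos : (0:ℝ) < (k:ℝ) - 1 := by linarith
    have hεk : 1/((k:ℝ)-1) < ε/2 := by
      rw [div_lt_div_iff₀ hkm1pos (by norm_num : (0:ℝ) < 2)]
      have := (div_lt_iff₀ hε).mp h2e
      nlinarith
    rw [Real.dist_eq, abs_sub_lt_iff]
    constructor
    · linarith
    · linarith
  · -- tendsto of partial sums
    exact tendsto_atTop_ciSup (Ssum_mono r) (Ssum_bdd r hr1 hrec)
  · exact hStoL 10
  · -- upper estimate with m = 10
    have h10 := hLtail 10 (by omega)
    have hr8 : 1 ≤ r 8 := r_pos r hr1 hrec 8 (by omega)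
    have hr9 : r 9 = r 8 * (r 8 + 1) := hrec 8 (by omega)
    have hr9ge : 2 ≤ r 9 := by rw [hr9]; nlinarith
    have hr10 : r 10 = r 9 * (r 9 + 1) := hrec 9 (by omega)
    have hr11 : r 11 = r 10 * (r 10 + 1) := hrec 10 (by omega)
    have ha : (2:ℝ) ≤ (r 9 : ℝ) := by exact_mod_cast hr9ge
    have hb : (r 10 : ℝ) = (r 9 : ℝ) * ((r 9 : ℝ) + 1) := by rw [hr10]; push_cast; ring
    have hc : (r 11 : ℝ) = (r 10 : ℝ) * ((r 10 : ℝ) + 1) := by rw [hr11]; push_cast; ring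
    have hbpos : (0:ℝ) < (r 10 : ℝ) := by rw [hb]; positivity
    have hcpos : (0:ℝ) < (r 11 : ℝ) := by rw [hc]; positivity
    have hkey : 2 / (r 11 : ℝ) ≤ 1 / ((r 10 : ℝ) * ((r 9 : ℝ) + 1)) := by
      rw [div_le_div_iff₀ hcpos (by positivity), hc, hb]
      have hfac : (0:ℝ) ≤ (r 9:ℝ) * ((r 9:ℝ)+1) * ((r 9:ℝ)^2 - (r 9:ℝ) - 1) := by
        apply mul_nonneg (by positivity)
        nlinarith
      nlinarith [hfac]
    calc L ≤ Ssum r 10 + 2 / (r 11 : ℝ) := h10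
      _ ≤ (∑ j ∈ Finset.Icc 1 10, 1 / (r j : ℝ)) + 1 / ((r 10 : ℝ) * ((r 9 : ℝ) + 1)) := by
        unfold Ssum
        linarith
  · -- lower numeric bound
    have := hStoL 6
    rw [hS6] at this
    norm_num at this ⊢
    linarith
  · -- upper numeric bound
    have h6' := hLtail 6 (by omega)
    rw [hS6, h7] at h6'
    norm_num at h6' ⊢
    linarith
end
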